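/- arXiv:2005.14046 — 3 statements merged into one kernel-verified Lean document; each statement's English description precedes it below -/
import Mathlib

section
/- For real parameters a, b, c with c > b > 0 and real x with |x| < 1, the Gauss hypergeometric function satisfies the Euler integral representation: ₂F₁(a,b;c;x) = Γ(c)/(Γ(b)Γ(c−b)) · ∫₀¹ t^{b−1}(1−t)^{c−b−1}(1−tx)^{−a} dt. -/
open MeasureTheory Real

set_option maxHeartbeats 1000000

noncomputable def hyp (a b c x : ℝ) : ℝ :=
  ∑' k : ℕ, ((ascPochhammer ℝ k).eval a * (ascPochhammer ℝ k).eval b /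
    ((k.factorial : ℝ) * (ascPochhammer ℝ k).eval c)) * x ^ k

section EulerAux
open Filter

noncomputable def pk (a : ℝ) (k : ℕ) : ℝ := (ascPochhammer ℝ k).eval a / k.factorial

lemma pk_zero (a : ℝ) : pk a 0 = 1 := by simp [pk]

lemma pk_succ (a : ℝ) (k : ℕ) : pk a (k+1) * (k+1) = pk a k * (a + k) := by
  have h : (k.factorial : ℝ) ≠ 0 := by positivity
  have h2 : ((k+1).factorial : ℝ) = (k+1) * k.factorial := by
    push_cast [Nat.factorial_succ]; ring
  simp only [pk, ascPochhammer_succ_eval, h2]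
  field_simp

lemma pk_succ' (a : ℝ) (k : ℕ) : pk a (k+1) = pk a k * (a + k) / (k+1) := by
  have h : ((k:ℝ)+1) ≠ 0 := by positivity
  field_simp [← pk_succ a k]
  exact pk_succ a k

lemma summable_master (a : ℝ) {r : ℝ} (hr0 : 0 ≤ r) (hr : r < 1) :
    Summable (fun k : ℕ => |pk a k| * (k+1) * r ^ k) := by
  set ε : ℝ := (1 - r) / 2 with hε
  have hεpos : 0 < ε := by rw [hε]; linarith
  apply summable_of_ratio_norm_eventually_le (r := (1 + r)/2) (by linarith)
  filter_upwards [eventually_ge_atTop (max 1 (Nat.ceil ((3 * |a| + 2)/ε)))] with k hk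
  have hk1 : (1:ℕ) ≤ k := le_of_max_le_left hk
  have hk2 : ((3 * |a| + 2)/ε) ≤ (k:ℝ) := by
    have := le_of_max_le_right hk
    calc (3 * |a| + 2)/ε ≤ (Nat.ceil ((3 * |a| + 2)/ε) : ℝ) := Nat.le_ceil _
    _ ≤ (k:ℝ) := by exact_mod_cast this
  have hεk : 3 * |a| + 2 ≤ ε * k := by
    rw [div_le_iff₀ hεpos] at hk2; linarith
  have hkR : (1:ℝ) ≤ (k:ℝ) := by exact_mod_cast hk1
  have habs : |a + (k:ℝ)| ≤ |a| + k := by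
    simpa [Nat.abs_cast] using abs_add_le a (k:ℝ)
  have key : |a + (k:ℝ)| * ((k:ℝ)+2) * r ≤ ((1+r)/2) * ((k:ℝ)+1)^2 := by
    have h1 : |a + (k:ℝ)| * ((k:ℝ)+2) * r ≤ (|a| + k) * (k+2) * r := by
      apply mul_le_mul_of_nonneg_right _ hr0
      apply mul_le_mul_of_nonneg_right habs (by positivity)
    refine h1.trans ?_
    have ha := abs_nonneg a
    have h2 : (3 * |a| + 2) * (k:ℝ) ≤ ε * k * k :=
      mul_le_mul_of_nonneg_right hεk (by positivity)
    have h3 : r * |a| ≤ 1 * |a| := mul_le_mul_of_nonneg_right hr.le ha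
    nlinarith [mul_le_mul_of_nonneg_right h3 (le_trans zero_le_one hkR), mul_le_mul_of_nonneg_left hkR ha]
  have hk1R : (0:ℝ) < (k:ℝ) + 1 := by positivity
  have step : |pk a (k+1)| * ((k:ℝ)+1+1) * r^(k+1) * ((k:ℝ)+1)
      ≤ ((1+r)/2) * (|pk a k| * ((k:ℝ)+1) * r^k) * ((k:ℝ)+1) := by
    have e : |pk a (k+1)| * ((k:ℝ)+1+1) * r^(k+1) * ((k:ℝ)+1)
        = (|pk a k| * r^k) * (|a + (k:ℝ)| * ((k:ℝ)+2) * r) := by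
      rw [pk_succ' a k, abs_div, abs_mul,
        abs_of_nonneg (show (0:ℝ) ≤ (k:ℝ)+1 by positivity)]
      field_simp
      ring
    rw [e]
    calc (|pk a k| * r^k) * (|a + (k:ℝ)| * ((k:ℝ)+2) * r)
        ≤ (|pk a k| * r^k) * (((1+r)/2) * ((k:ℝ)+1)^2) :=
          mul_le_mul_of_nonneg_left key (by positivity)
      _ = ((1+r)/2) * (|pk a k| * ((k:ℝ)+1) * r^k) * ((k:ℝ)+1) := by ring
  have final := le_of_mul_le_mul_right step hk1R
  calc ‖|pk a (k+1)| * (↑(k+1)+1) * r ^ (k+1)‖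
      = |pk a (k+1)| * ((k:ℝ)+1+1) * r ^ (k+1) := by
        rw [norm_of_nonneg (by positivity)]; push_cast; ring
    _ ≤ ((1+r)/2) * (|pk a k| * ((k:ℝ)+1) * r ^ k) := final
    _ = ((1+r)/2) * ‖|pk a k| * (↑k+1) * r ^ k‖ := by
        rw [norm_of_nonneg (by positivity)]

lemma summable_pk_pow (a : ℝ) {r y : ℝ} (hr0 : 0 ≤ r) (hr : r < 1) (hy : |y| ≤ r) :
    Summable (fun k : ℕ => pk a k * y ^ k) := by
  apply Summable.of_norm_bounded (summable_master a hr0 hr)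
  intro k
  rw [norm_mul, norm_pow]
  calc ‖pk a k‖ * ‖y‖ ^ k ≤ |pk a k| * r ^ k := by
        apply mul_le_mul_of_nonneg_left _ (abs_nonneg _)
        exact pow_le_pow_left₀ (abs_nonneg _) hy k
    _ = |pk a k| * 1 * r ^ k := by ring
    _ ≤ |pk a k| * ((k:ℝ)+1) * r ^ k := by
        gcongr
        linarith [Nat.cast_nonneg (α := ℝ) k]

lemma binomial_hasSum (a : ℝ) {u : ℝ} (hu : |u| < 1) :
    HasSum (fun k : ℕ => pk a k * u ^ k) ((1 - u) ^ (-a)) := by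
  set r : ℝ := (|u| + 1) / 2 with hrdef
  have h0u : 0 ≤ |u| := abs_nonneg u
  have hr0 : 0 < r := by rw [hrdef]; linarith
  have hr1 : r < 1 := by rw [hrdef]; linarith
  have hur : |u| < r := by rw [hrdef]; linarith
  set t : Set ℝ := Set.Ioo (-r) r with htdef
  have hmem : ∀ y ∈ t, |y| ≤ r := fun y hy => abs_le.mpr ⟨hy.1.le, hy.2.le⟩
  have hut : u ∈ t := by
    rw [htdef]
    exact ⟨by linarith [neg_abs_le u], by linarith [le_abs_self u]⟩
  have h0t : (0:ℝ) ∈ t := by rw [htdef]; exact ⟨by linarith, hr0⟩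
  set g : ℕ → ℝ → ℝ := fun n y => pk a n * y ^ n with hgdef
  set g' : ℕ → ℝ → ℝ := fun n y => pk a n * (n * y ^ (n-1)) with hg'def
  set S : ℝ → ℝ := fun y => ∑' n, g n y with hSdef
  have husum : Summable (fun n : ℕ => (|pk a n| * (n+1) * r ^ n) * r⁻¹) :=
    (summable_master a hr0.le hr1).mul_right r⁻¹
  have hbound : ∀ (n : ℕ), ∀ y ∈ t, ‖g' n y‖ ≤ (|pk a n| * (n+1) * r ^ n) * r⁻¹ := by
    intro n y hy
    rcases n with _ | m
    · simp only [hg'def, Nat.cast_zero, zero_mul, mul_zero, norm_zero]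
      positivity
    · calc ‖g' (m+1) y‖ = |pk a (m+1)| * (((m:ℝ)+1) * |y| ^ m) := by
            simp only [hg'def, Nat.add_sub_cancel]
            rw [norm_mul, norm_mul, norm_pow]
            push_cast
            rw [Real.norm_eq_abs, Real.norm_eq_abs, Real.norm_eq_abs,
              abs_of_nonneg (show (0:ℝ) ≤ (m:ℝ)+1 by positivity)]
      _ ≤ |pk a (m+1)| * ((((m:ℝ)+1)+1) * r ^ m) := by
            gcongr
            · linarith
            · exact hmem y hy
      _ = (|pk a (m+1)| * (((m+1:ℕ):ℝ)+1) * r ^ (m+1)) * r⁻¹ := by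
            have : r ≠ 0 := hr0.ne'
            push_cast
            field_simp
            ring
  have hgderiv : ∀ (n : ℕ), ∀ (y : ℝ), y ∈ t → HasDerivAt (g n) (g' n y) y :=
    fun n y _ => (hasDerivAt_pow n y).const_mul (pk a n)
  have hsum0 : Summable (fun n => g n 0) :=
    summable_pk_pow a hr0.le hr1 (by rw [abs_zero]; exact hr0.le)
  have hD : ∀ y ∈ t, HasDerivAt S (∑' n, g' n y) y := fun y hy =>
    hasDerivAt_tsum_of_isPreconnected husum isOpen_Ioo (convex_Ioo _ _).isPreconnected
      hgderiv hbound h0t hsum0 hy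
  -- the ODE identity
  have key : ∀ y ∈ t, (1 - y) * (∑' n, g' n y) = a * S y := by
    intro y hy
    have hyr : |y| ≤ r := hmem y hy
    have hDsum : Summable (fun n => g' n y) :=
      Summable.of_norm_bounded husum (fun n => hbound n y hy)
    have hs1 : Summable (fun n : ℕ => (pk a n * (a + n)) * y ^ n) := by
      apply Summable.of_norm_bounded ((summable_master a hr0.le hr1).mul_left (|a|+1))
      intro n
      rw [norm_mul, norm_mul, norm_pow]
      have h1 : ‖(n:ℝ)‖ = (n:ℝ) := by
        rw [Real.norm_eq_abs, Nat.abs_cast]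
      have h2 : ‖a + (n:ℝ)‖ ≤ (|a|+1) * ((n:ℝ)+1) := by
        rw [Real.norm_eq_abs]
        calc |a + (n:ℝ)| ≤ |a| + (n:ℝ) := by
              simpa [Nat.abs_cast] using abs_add_le a (n:ℝ)
          _ ≤ (|a|+1) * ((n:ℝ)+1) := by nlinarith [abs_nonneg a, Nat.cast_nonneg (α := ℝ) n]
      calc ‖pk a n‖ * ‖a + (n:ℝ)‖ * ‖y‖ ^ n
          ≤ ‖pk a n‖ * ((|a|+1) * ((n:ℝ)+1)) * r ^ n := by
            apply mul_le_mul _ (pow_le_pow_left₀ (norm_nonneg _) hyr n)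
              (by positivity) (by positivity)
            exact mul_le_mul_of_nonneg_left h2 (norm_nonneg _)
        _ = (|a|+1) * (|pk a n| * ((n:ℝ)+1) * r ^ n) := by
            rw [Real.norm_eq_abs]; ring
    have hs2 : Summable (fun n : ℕ => (pk a n * n) * y ^ n) := by
      apply Summable.of_norm_bounded (summable_master a hr0.le hr1)
      intro n
      rw [norm_mul, norm_mul, norm_pow, Real.norm_eq_abs (n:ℝ), Nat.abs_cast]
      apply mul_le_mul _ (pow_le_pow_left₀ (norm_nonneg _) hyr n)
        (by positivity) (by positivity)
      rw [Real.norm_eq_abs]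
      have : (n:ℝ) ≤ (n:ℝ) + 1 := by linarith
      exact mul_le_mul_of_nonneg_left this (abs_nonneg _)
    have e1 : (∑' n, g' n y) = ∑' n, (pk a n * (a + n)) * y ^ n := by
      rw [Summable.tsum_eq_zero_add hDsum]
      have h0 : g' 0 y = 0 := by simp [hg'def]
      rw [h0, zero_add]
      apply tsum_congr
      intro n
      have : g' (n+1) y = (pk a (n+1) * ((n:ℝ)+1)) * y ^ n := by
        simp only [hg'def, Nat.add_sub_cancel]
        push_cast
        ring
      rw [this, pk_succ]
    have e2 : y * (∑' n, g' n y) = ∑' n, (pk a n * n) * y ^ n := by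
      rw [← tsum_mul_left]
      apply tsum_congr
      intro n
      rcases n with _ | m
      · simp [hg'def]
      · simp only [hg'def, Nat.add_sub_cancel]
        push_cast
        ring
    have e3 : (∑' n, g' n y) - y * (∑' n, g' n y) = a * S y := by
      rw [e2, e1, ← Summable.tsum_sub hs1 hs2, hSdef]
      simp only
      rw [← tsum_mul_left]
      apply tsum_congr
      intro n
      simp only [hgdef]
      ring
    linarith [e3]
  -- constancy of S y * (1-y)^a on t
  set φ : ℝ → ℝ := fun y => S y * (1 - y) ^ a with hφdef
  have hφ0 : ∀ y ∈ t, HasDerivAt φ 0 y := by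
    intro y hy
    have h1y : 0 < 1 - y := by linarith [hy.2, hr1]
    have hrpow : HasDerivAt (fun z : ℝ => (1 - z) ^ a) ((a * (1-y) ^ (a-1)) * (-1)) y := by
      have hinner : HasDerivAt (fun z : ℝ => 1 - z) (-1) y := (hasDerivAt_id y).const_sub 1
      exact (Real.hasDerivAt_rpow_const (Or.inl h1y.ne')).comp y hinner
    have hmul := ((hD y hy).mul hrpow)
    have : (∑' n, g' n y) * (1 - y) ^ a + S y * ((a * (1-y) ^ (a-1)) * (-1)) = 0 := by
      have hsplit : (1 - y) ^ a = (1 - y) ^ (a-1) * (1 - y) := by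
        rw [← Real.rpow_add_one h1y.ne']
        ring_nf
      rw [hsplit]
      linear_combination (1 - y) ^ (a-1) * (key y hy)
    rwa [this] at hmul
  have hconst : φ u = φ 0 := by
    have hdiff : DifferentiableOn ℝ φ t :=
      fun y hy => ((hφ0 y hy).differentiableAt).differentiableWithinAt
    refine (convex_Ioo _ _).is_const_of_fderivWithin_eq_zero hdiff ?_ hut h0t
    intro y hy
    have h0 : HasFDerivAt φ (0 : ℝ →L[ℝ] ℝ) y := by
      have h := (hφ0 y hy).hasFDerivAt
      have e : (ContinuousLinearMap.toSpanSingleton ℝ (0:ℝ)) = 0 := by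
        ext z; simp
      rwa [e] at h
    rw [fderivWithin_of_isOpen isOpen_Ioo hy, h0.fderiv]
  have hS0 : S 0 = 1 := by
    rw [hSdef]
    simp only
    rw [Summable.tsum_eq_zero_add hsum0]
    have h1 : g 0 0 = 1 := by simp [hgdef, pk_zero]
    have h2 : ∑' n : ℕ, g (n+1) 0 = 0 := by
      rw [tsum_congr (fun n => show g (n+1) 0 = (0:ℝ) by simp [hgdef])]
      exact tsum_zero
    rw [h1, h2, add_zero]
  have hφu : S u * (1 - u) ^ a = 1 := by
    have := hconst
    rw [hφdef] at this
    simp only at this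
    rw [hS0, sub_zero, Real.one_rpow, one_mul] at this
    exact this
  have h1u : 0 < 1 - u := by linarith [le_abs_self u]
  have hSu : S u = (1 - u) ^ (-a) := by
    rw [Real.rpow_neg h1u.le]
    have hne : (1 - u) ^ a ≠ 0 := by positivity
    field_simp at hφu ⊢
    linarith [hφu]
  have hsum : Summable (fun k : ℕ => pk a k * u ^ k) :=
    summable_pk_pow a hr0.le hr1 hur.le
  have := hsum.hasSum
  rwa [show ∑' k, pk a k * u ^ k = (1-u) ^ (-a) from hSu] at this

lemma beta_real {u v : ℝ} (hu : 0 < u) (hv : 0 < v) :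
    ∫ x in (0:ℝ)..1, x ^ (u-1) * (1-x) ^ (v-1) = Gamma u * Gamma v / Gamma (u+v) := by
  have h := Complex.Gamma_mul_Gamma_eq_betaIntegral (s := (u:ℂ)) (t := (v:ℂ))
    (by simpa using hu) (by simpa using hv)
  have hbeta : Complex.betaIntegral (u:ℂ) (v:ℂ)
      = ((∫ x in (0:ℝ)..1, x ^ (u-1) * (1-x) ^ (v-1) : ℝ) : ℂ) := by
    rw [Complex.betaIntegral, ← intervalIntegral.integral_ofReal]
    apply intervalIntegral.integral_congr
    intro x hx
    rw [Set.uIcc_of_le (by norm_num : (0:ℝ) ≤ 1)] at hx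
    have h1 : ((x ^ (u-1) : ℝ) : ℂ) = (x:ℂ) ^ ((u:ℂ)-1) := by
      rw [Complex.ofReal_cpow hx.1, Complex.ofReal_sub, Complex.ofReal_one]
    have h2 : ((((1-x) ^ (v-1)) : ℝ) : ℂ) = (1 - (x:ℂ)) ^ ((v:ℂ)-1) := by
      rw [Complex.ofReal_cpow (by linarith [hx.2])]
      push_cast
      ring_nf
    show (x:ℂ) ^ ((u:ℂ)-1) * (1 - (x:ℂ)) ^ ((v:ℂ)-1)
      = ((x ^ (u-1) * (1-x) ^ (v-1) : ℝ) : ℂ)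
    rw [Complex.ofReal_mul, h1, h2]
  rw [hbeta] at h
  rw [show ((u:ℂ)+(v:ℂ)) = ((u+v : ℝ) : ℂ) by push_cast; ring] at h
  rw [Complex.Gamma_ofReal, Complex.Gamma_ofReal, Complex.Gamma_ofReal] at h
  have hne : Real.Gamma (u+v) ≠ 0 := (Real.Gamma_pos_of_pos (by linarith)).ne'
  have h' : Real.Gamma u * Real.Gamma v
      = Real.Gamma (u+v) * ∫ x in (0:ℝ)..1, x ^ (u-1) * (1-x) ^ (v-1) := by
    exact_mod_cast h
  field_simp
  linarith [h']

lemma beta_cx_eq {u v t : ℝ} (ht0 : 0 ≤ t) (ht1 : t ≤ 1) :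
    (t:ℂ) ^ ((u:ℂ)-1) * (1 - (t:ℂ)) ^ ((v:ℂ)-1)
      = ((t ^ (u-1) * (1-t) ^ (v-1) : ℝ) : ℂ) := by
  have h1 : ((t ^ (u-1) : ℝ) : ℂ) = (t:ℂ) ^ ((u:ℂ)-1) := by
    rw [Complex.ofReal_cpow ht0]
    push_cast
    ring_nf
  have h2 : ((((1-t) ^ (v-1)) : ℝ) : ℂ) = (1 - (t:ℂ)) ^ ((v:ℂ)-1) := by
    rw [Complex.ofReal_cpow (by linarith)]
    push_cast
    ring_nf
  rw [Complex.ofReal_mul, h1, h2]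

lemma beta_integrableOn {u v : ℝ} (hu : 0 < u) (hv : 0 < v) :
    IntegrableOn (fun t : ℝ => t ^ (u-1) * (1-t) ^ (v-1)) (Set.Ioc 0 1) volume := by
  have h := Complex.betaIntegral_convergent (u := (u:ℂ)) (v := (v:ℂ))
    (by simpa using hu) (by simpa using hv)
  have hIoc := (intervalIntegrable_iff_integrableOn_Ioc_of_le zero_le_one).mp h
  have hre := hIoc.re
  apply hre.congr
  filter_upwards [ae_restrict_mem measurableSet_Ioc] with t ht
  rw [beta_cx_eq ht.1.le ht.2]
  simp

lemma gamma_poch {b : ℝ} (hb : 0 < b) (k : ℕ) :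
    Gamma (b + k) = (ascPochhammer ℝ k).eval b * Gamma b := by
  induction k with
  | zero => simp
  | succ n ih =>
    have hbn : b + n ≠ 0 := by positivity
    have : b + (n+1 : ℕ) = (b + n) + 1 := by push_cast; ring
    rw [this, Real.Gamma_add_one hbn, ih, ascPochhammer_succ_eval]
    ring

lemma poch_pos {c : ℝ} (hc : 0 < c) (k : ℕ) : 0 < (ascPochhammer ℝ k).eval c := by
  induction k with
  | zero => simp
  | succ n ih =>
    rw [ascPochhammer_succ_eval]
    have : (0:ℝ) < c + n := by positivity
    positivity

theorem euler_aux (a b c x : ℝ) (hb : 0 < b) (hcb : b < c) (hx : |x| < 1) :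
    (∑' k : ℕ, ((ascPochhammer ℝ k).eval a * (ascPochhammer ℝ k).eval b /
    ((k.factorial : ℝ) * (ascPochhammer ℝ k).eval c)) * x ^ k)
    = (Real.Gamma c / (Real.Gamma b * Real.Gamma (c - b))) *
      ∫ t in (0:ℝ)..1, t ^ (b - 1) * (1 - t) ^ (c - b - 1) * (1 - t * x) ^ (-a) := by
  have hc : 0 < c := hb.trans hcb
  have hw : 0 < c - b := by linarith
  have hx0 : (0:ℝ) ≤ |x| := abs_nonneg x
  set F : ℕ → ℝ → ℝ :=
    fun k t => (pk a k * x ^ k) * (t ^ (b + k - 1) * (1-t) ^ (c - b - 1)) with hFdef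
  have hFint : ∀ k : ℕ, IntegrableOn (F k) (Set.Ioc (0:ℝ) 1) volume := by
    intro k
    exact (beta_integrableOn (u := b + k) (by positivity) hw).const_mul _
  have hBval : ∀ k : ℕ, ∫ t in Set.Ioc (0:ℝ) 1, t ^ (b + k - 1) * (1-t) ^ (c - b - 1)
      = Gamma (b + k) * Gamma (c - b) / Gamma (c + k) := by
    intro k
    rw [← intervalIntegral.integral_of_le zero_le_one]
    have := beta_real (u := b + k) (v := c - b) (by positivity) hw
    rw [show b + (k:ℝ) + (c - b) = c + k by ring] at this
    exact this
  set B0 : ℝ := ∫ t in Set.Ioc (0:ℝ) 1, t ^ (b - 1) * (1-t) ^ (c - b - 1) with hB0def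
  have hB0int : IntegrableOn (fun t : ℝ => t ^ (b - 1) * (1-t) ^ (c - b - 1))
      (Set.Ioc (0:ℝ) 1) volume := beta_integrableOn hb hw
  have hB0nonneg : 0 ≤ B0 := by
    apply setIntegral_nonneg measurableSet_Ioc
    intro t ht
    have ht0 : (0:ℝ) < t := ht.1
    have : (0:ℝ) ≤ 1 - t := by linarith [ht.2]
    positivity
  -- bound on the integral of the norm
  have hnorm_le : ∀ k : ℕ, (∫ t in Set.Ioc (0:ℝ) 1, ‖F k t‖)
      ≤ B0 * (|pk a k| * (k+1) * |x| ^ k) := by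
    intro k
    have heq : ∀ t ∈ Set.Ioc (0:ℝ) 1, ‖F k t‖
        = (|pk a k| * |x| ^ k) * (t ^ (b + k - 1) * (1-t) ^ (c - b - 1)) := by
      intro t ht
      have h1t : (0:ℝ) ≤ 1 - t := by linarith [ht.2]
      have ht0 : (0:ℝ) < t := ht.1
      rw [hFdef]
      simp only
      rw [Real.norm_eq_abs, abs_mul, abs_mul, abs_pow,
        abs_of_nonneg (by positivity : (0:ℝ) ≤ t ^ (b + k - 1) * (1-t) ^ (c - b - 1))]
    rw [setIntegral_congr_fun measurableSet_Ioc heq, integral_const_mul]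
    have hmono : (∫ t in Set.Ioc (0:ℝ) 1, t ^ (b + k - 1) * (1-t) ^ (c - b - 1)) ≤ B0 := by
      rw [hB0def]
      apply setIntegral_mono_on (beta_integrableOn (u := b + k) (by positivity) hw)
        hB0int measurableSet_Ioc
      intro t ht
      have h1t : (0:ℝ) ≤ 1 - t := by linarith [ht.2]
      have := Real.rpow_le_rpow_of_exponent_ge ht.1 ht.2
        (show b - 1 ≤ b + k - 1 by linarith [Nat.cast_nonneg (α := ℝ) k])
      apply mul_le_mul_of_nonneg_right this (by positivity)
    calc (|pk a k| * |x| ^ k) * (∫ t in Set.Ioc (0:ℝ) 1, t ^ (b + k - 1) * (1-t) ^ (c-b-1))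
        ≤ (|pk a k| * |x| ^ k) * B0 := by
          apply mul_le_mul_of_nonneg_left hmono (by positivity)
      _ ≤ B0 * (|pk a k| * (k+1) * |x| ^ k) := by
          have h1 : |pk a k| * |x| ^ k * 1 ≤ |pk a k| * |x| ^ k * ((k:ℝ)+1) := by
            apply mul_le_mul_of_nonneg_left (by linarith [Nat.cast_nonneg (α := ℝ) k])
              (by positivity)
          nlinarith [mul_le_mul_of_nonneg_left h1 hB0nonneg]
  have hFnormsum : Summable (fun k : ℕ => ∫ t in Set.Ioc (0:ℝ) 1, ‖F k t‖) := by
    apply Summable.of_nonneg_of_le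
      (fun k => integral_nonneg (fun t => norm_nonneg _)) hnorm_le
    exact (summable_master a hx0 hx).mul_left B0
  have hkey : (∫ t in Set.Ioc (0:ℝ) 1, t ^ (b - 1) * (1 - t) ^ (c - b - 1) * (1 - t * x) ^ (-a))
      = ∑' k : ℕ, (pk a k * x ^ k) * (Gamma (b + k) * Gamma (c - b) / Gamma (c + k)) := by
    have hsum_eq : ∀ t ∈ Set.Ioc (0:ℝ) 1,
        t ^ (b - 1) * (1 - t) ^ (c - b - 1) * (1 - t * x) ^ (-a) = ∑' k, F k t := by
      intro t ht
      have htx : |t * x| < 1 := by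
        rw [abs_mul]
        calc |t| * |x| ≤ 1 * |x| := by
              apply mul_le_mul_of_nonneg_right _ hx0
              rw [abs_of_pos ht.1]; exact ht.2
          _ < 1 := by rwa [one_mul]
      have hbs := (binomial_hasSum a htx).mul_left (t ^ (b - 1) * (1 - t) ^ (c - b - 1))
      have := hbs.tsum_eq
      rw [← this]
      apply tsum_congr
      intro k
      rw [hFdef]
      simp only
      rw [show b + (k:ℝ) - 1 = (b - 1) + (k:ℝ) by ring,
        Real.rpow_add ht.1, Real.rpow_natCast, mul_pow]
      ring
    rw [setIntegral_congr_fun measurableSet_Ioc hsum_eq,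
      ← integral_tsum_of_summable_integral_norm hFint hFnormsum]
    apply tsum_congr
    intro k
    rw [hFdef]
    simp only
    rw [integral_const_mul, hBval k]
  -- final algebra
  rw [intervalIntegral.integral_of_le zero_le_one, hkey, ← tsum_mul_left]
  apply tsum_congr
  intro k
  have hΓb := Real.Gamma_pos_of_pos hb
  have hΓw := Real.Gamma_pos_of_pos hw
  have hΓc := Real.Gamma_pos_of_pos hc
  have hΓck := Real.Gamma_pos_of_pos (show (0:ℝ) < c + k by positivity)
  have hpc := poch_pos hc k
  have hfac : (k.factorial : ℝ) ≠ 0 := by positivity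
  rw [gamma_poch hb k, gamma_poch hc k, pk]
  field_simp

end EulerAux

theorem euler_integral_repr (a b c x : ℝ) (hb : 0 < b) (hcb : b < c) (hx : |x| < 1) :
    hyp a b c x = (Real.Gamma c / (Real.Gamma b * Real.Gamma (c - b))) *
      ∫ t in (0:ℝ)..1, t ^ (b - 1) * (1 - t) ^ (c - b - 1) * (1 - t * x) ^ (-a) := by
  rw [hyp]
  exact euler_aux a b c x hb hcb hx
end

section
/- Let n ≥ 2 and q ∈ (1, 1 + 1/(n−1)). The function φ(ρ) = ₂F₁(−(n−1)(q−1), n/2 + q − nq; n/2; ρ) is nondecreasing on [0,1]; in particular max_{ρ∈[0,1]} φ(ρ) = φ(1). -/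
open MeasureTheory Real

namespace HypAux
open Finset Filter Topology

noncomputable def co (A B C : ℝ) (k : ℕ) : ℝ :=
  (ascPochhammer ℝ k).eval A * (ascPochhammer ℝ k).eval B /
    ((k.factorial : ℝ) * (ascPochhammer ℝ k).eval C)

def sh (g : ℕ → ℝ) : ℕ → ℝ
  | 0 => 0
  | (k+1) => g k

lemma poch_pos {C : ℝ} (hC : 0 < C) (k : ℕ) : 0 < (ascPochhammer ℝ k).eval C := by
  induction k with
  | zero => simp
  | succ m ih =>
    rw [ascPochhammer_succ_eval]
    exact mul_pos ih (by positivity)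

lemma co_zero (A B C : ℝ) : co A B C 0 = 1 := by simp [co]

lemma co_one (A B C : ℝ) (hC : C ≠ 0) : co A B C 1 = A * B / C := by
  simp [co, ascPochhammer_one]

lemma co_succ (A B C : ℝ) (hC : 0 < C) (k : ℕ) :
    co A B C (k+1) * (((k:ℝ)+1) * ((k:ℝ) + C)) = co A B C k * (((k:ℝ) + A) * ((k:ℝ) + B)) := by
  have h1 : ((k.factorial : ℝ)) ≠ 0 := Nat.cast_ne_zero.mpr k.factorial_ne_zero
  have h2 : (ascPochhammer ℝ k).eval C ≠ 0 := (poch_pos hC k).ne'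
  have h3 : ((k:ℝ) + C) ≠ 0 := by positivity
  simp only [co, ascPochhammer_succ_eval, Nat.factorial_succ]
  push_cast
  field_simp
  ring


lemma Sp1 (j : ℕ) {r : ℝ} (h0 : 0 < r) (h1 : r < 1) :
    Summable (fun k : ℕ => ((k:ℝ)+1)^j * r^k) := by
  have hn : ‖r‖ < 1 := by rwa [Real.norm_eq_abs, abs_of_pos h0]
  have h := summable_pow_mul_geometric_of_norm_lt_one (R := ℝ) j hn
  have h2 : Summable (fun n : ℕ => ((n+1 : ℕ):ℝ)^j * r^(n+1)) :=
    (summable_nat_add_iff 1).mpr h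
  refine (h2.mul_left r⁻¹).congr fun n => ?_
  push_cast
  field_simp
  ring

lemma summable_poly_bound (d : ℕ → ℝ) (M : ℝ) (j : ℕ)
    (hd : ∀ k, |d k| ≤ M * ((k:ℝ)+1)^j) {x : ℝ} (hx : |x| < 1) :
    Summable (fun k => d k * x^k) := by
  have hM : 0 ≤ M := by
    have := (abs_nonneg (d 0)).trans (hd 0); simpa using this
  set r : ℝ := (|x|+1)/2 with hr
  have hxr : |x| ≤ r := by simp only [hr]; linarith
  have hr0 : 0 < r := lt_of_le_of_lt (abs_nonneg x) (by simp only [hr]; linarith)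
  have hr1 : r < 1 := by simp only [hr]; linarith
  refine Summable.of_norm_bounded (((Sp1 j hr0 hr1).mul_left M)) fun k => ?_
  rw [Real.norm_eq_abs, abs_mul, abs_pow, ← mul_assoc]
  exact mul_le_mul (hd k) (pow_le_pow_left₀ (abs_nonneg x) hxr k) (by positivity)
    (mul_nonneg hM (by positivity))


lemma hasDerivAt_tsum_pow (d : ℕ → ℝ) (M : ℝ) (hd : ∀ k, |d k| ≤ M * ((k:ℝ)+1)^3)
    {x : ℝ} (hx : |x| < 1) :
    HasDerivAt (fun y => ∑' k : ℕ, d k * y^k) (∑' k : ℕ, (((k:ℝ)+1) * d (k+1)) * x^k) x := by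
  have hM : 0 ≤ M := by
    have := (abs_nonneg (d 0)).trans (hd 0); simpa using this
  set r : ℝ := (|x|+1)/2 with hr
  have hxr : |x| < r := by simp only [hr]; linarith
  have hr0 : 0 < r := lt_of_le_of_lt (abs_nonneg x) hxr
  have hr1 : r < 1 := by simp only [hr]; linarith
  have hbound : ∀ (k:ℕ) (y:ℝ), |y| ≤ r →
      ‖d k * ((k:ℝ) * y^(k-1))‖ ≤ M * (((k:ℝ)+1)^3 * ((k:ℝ) * r^(k-1))) := by
    intro k y hy
    rw [Real.norm_eq_abs, abs_mul, abs_mul, abs_pow, Nat.abs_cast, ← mul_assoc]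
    have h1 : |d k| * (k:ℝ) ≤ (M * ((k:ℝ)+1)^3) * (k:ℝ) :=
      mul_le_mul_of_nonneg_right (hd k) (Nat.cast_nonneg k)
    have h2 := mul_le_mul h1 (pow_le_pow_left₀ (abs_nonneg y) hy (k-1))
      (by positivity) (by positivity)
    calc |d k| * (k:ℝ) * |y|^(k-1) ≤ (M * ((k:ℝ)+1)^3) * (k:ℝ) * r^(k-1) := h2
      _ = M * (((k:ℝ)+1)^3 * ((k:ℝ) * r^(k-1))) := by ring
  have Su : Summable (fun k : ℕ => M * (((k:ℝ)+1)^3 * ((k:ℝ) * r^(k-1)))) := by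
    rw [← summable_nat_add_iff 1]
    simp only [Nat.add_sub_cancel]
    push_cast
    refine Summable.of_nonneg_of_le (fun k => ?_) (fun k => ?_)
      ((Sp1 4 hr0 hr1).mul_left (8*M))
    · have : (0:ℝ) ≤ r^k := by positivity
      positivity
    · have h1 : ((k:ℝ)+1+1)^3 ≤ 8*((k:ℝ)+1)^3 := by
        have ht : (0:ℝ) ≤ (k:ℝ) := Nat.cast_nonneg k
        nlinarith [ht, mul_nonneg ht ht, mul_nonneg (mul_nonneg ht ht) ht]
      have h2 : (0:ℝ) ≤ r^k := by positivity
      have h3 : (0:ℝ) ≤ ((k:ℝ)+1) := by positivity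
      calc M * (((k:ℝ)+1+1)^3 * (((k:ℝ)+1) * r^k))
          ≤ M * ((8*((k:ℝ)+1)^3) * (((k:ℝ)+1) * r^k)) := by
            refine mul_le_mul_of_nonneg_left (mul_le_mul_of_nonneg_right h1 (by positivity)) hM
        _ = 8*M * (((k:ℝ)+1)^4 * r^k) := by ring
  set s := Metric.ball (0:ℝ) r with hs
  have hos : IsOpen s := Metric.isOpen_ball
  have hxs : x ∈ s := by
    simp only [hs, Metric.mem_ball, Real.dist_eq, sub_zero]; exact hxr
  have hys : ∀ y ∈ s, |y| ≤ r := by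
    intro y hy
    simp only [hs, Metric.mem_ball, Real.dist_eq, sub_zero] at hy; exact hy.le
  have hunif : TendstoUniformlyOn
      (fun (n:ℕ) (y:ℝ) => ∑ k ∈ range n, d k * ((k:ℝ) * y^(k-1)))
      (fun y => ∑' k, d k * ((k:ℝ) * y^(k-1))) atTop s :=
    tendstoUniformlyOn_tsum_nat Su (fun k y hy => hbound k y (hys y hy))
  have hderiv : ∀ (n:ℕ), ∀ y ∈ s, HasDerivAt (fun z => ∑ k ∈ range n, d k * z^k)
      (∑ k ∈ range n, d k * ((k:ℝ) * y^(k-1))) y := by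
    intro n y _
    exact HasDerivAt.fun_sum fun k _ => (hasDerivAt_pow k y).const_mul (d k)
  have hpt : ∀ y ∈ s, Tendsto (fun n => ∑ k ∈ range n, d k * y^k) atTop
      (𝓝 (∑' k, d k * y^k)) := fun y hy =>
    (summable_poly_bound d M 3 hd (lt_of_le_of_lt (hys y hy) hr1)).hasSum.tendsto_sum_nat
  have H := hasDerivAt_of_tendstoUniformlyOn hos hunif (Eventually.of_forall hderiv) hpt hxs
  refine H.congr_deriv (Eq.symm ?_)
  have hsx : Summable (fun k => d k * ((k:ℝ) * x^(k-1))) :=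
    Summable.of_norm_bounded Su (fun k => hbound k x hxr.le)
  rw [Summable.tsum_eq_zero_add hsx]
  norm_num
  exact tsum_congr fun k => by push_cast [Nat.add_sub_cancel]; ring


lemma summable_sh {g : ℕ → ℝ} {x : ℝ} (hg : Summable (fun k => g k * x^k)) :
    Summable (fun k => sh g k * x^k) := by
  rw [← summable_nat_add_iff 1]
  refine (hg.mul_left x).congr fun n => ?_
  show x * (g n * x ^ n) = sh g (n+1) * x^(n+1)
  simp only [sh, pow_succ]
  ring

lemma mul_tsum_sh {g : ℕ → ℝ} {x : ℝ} (hg : Summable (fun k => g k * x^k)) :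
    x * ∑' k : ℕ, g k * x^k = ∑' k : ℕ, sh g k * x^k := by
  rw [Summable.tsum_eq_zero_add (summable_sh hg)]
  simp only [sh, pow_zero, mul_one, zero_mul, zero_add]
  rw [← tsum_mul_left]
  exact tsum_congr fun k => by simp only [pow_succ]; ring

set_option maxHeartbeats 2000000 in
theorem mono_general (A B C : ℝ) (hA1 : -1 < A) (hA0 : A < 0) (hB0 : B < 0)
    (hBC : -C < B) (hC1 : 1 ≤ C) (hsumc : A + B + 1 ≤ C) :
    MonotoneOn (fun x : ℝ => ∑' k : ℕ, co A B C k * x^k) (Set.Icc (0:ℝ) 1) := by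
  have hC0 : 0 < C := lt_of_lt_of_le one_pos hC1
  set cc := co A B C with hcc
  obtain ⟨K, hK⟩ : ∃ K : ℕ, C + 3 ≤ K :=
    ⟨⌈C⌉₊ + 3, by push_cast; have := Nat.le_ceil C; linarith⟩
  have key : ∀ k : ℕ, (K:ℝ) ≤ k →
      ((k:ℝ)+A)*((k:ℝ)+B)*((k:ℝ)+2)^2 ≤ ((k:ℝ)+1)^3*((k:ℝ)+C) := by
    intro k hk
    have hkC : C + 3 ≤ (k:ℝ) := le_trans hK hk
    set t : ℝ := (k:ℝ) with ht
    have ht0 : (0:ℝ) ≤ t := Nat.cast_nonneg k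
    have ht4 : (4:ℝ) ≤ t := by linarith
    have e : (t+1)^3*(t+C) - (t+A)*(t+B)*(t+2)^2 =
        (C-A-B-1)*t^3 + (3*C-1-4*(A+B)-A*B)*t^2 + (3*C+1-4*(A+B)-4*(A*B))*t + (C-4*(A*B)) := by
      ring
    have hp : A*B < C := by
      nlinarith [mul_pos (by linarith : (0:ℝ) < A+1) (by linarith : (0:ℝ) < -B)]
    have hs : A + B < 0 := by linarith
    have hd3 : 0 ≤ (C-A-B-1)*t^3 := mul_nonneg (by linarith) (by positivity)
    have hc2 : (2*C-1) ≤ (3*C-1-4*(A+B)-A*B) := by linarith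
    have hc1 : (1-C) ≤ (3*C+1-4*(A+B)-4*(A*B)) := by linarith
    have hc0 : -(3*C) ≤ (C-4*(A*B)) := by linarith
    have H2 : (2*C-1)*t^2 ≤ (3*C-1-4*(A+B)-A*B)*t^2 :=
      mul_le_mul_of_nonneg_right hc2 (by positivity)
    have H1 : (1-C)*t ≤ (3*C+1-4*(A+B)-4*(A*B))*t := mul_le_mul_of_nonneg_right hc1 ht0
    have tail : 0 ≤ (2*C-1)*t^2 + (1-C)*t + -(3*C) := by
      nlinarith [mul_nonneg ht0 (by linarith : (0:ℝ) ≤ t - 4), hC1, ht4]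
    nlinarith [e, hd3, H2, H1, tail]
  have step : ∀ k : ℕ, (K:ℝ) ≤ (k:ℝ) →
      |cc (k+1)| * ((k:ℝ)+2)^2 ≤ |cc k| * ((k:ℝ)+1)^2 := by
    intro k hk
    have hkC : C + 3 ≤ (k:ℝ) := le_trans hK hk
    have hrec := co_succ A B C hC0 k
    have h1 : (0:ℝ) ≤ ((k:ℝ)+1) * ((k:ℝ)+C) := by positivity
    have h2 : (0:ℝ) ≤ ((k:ℝ)+A) * ((k:ℝ)+B) := by nlinarith
    have habs : |cc (k+1)| * (((k:ℝ)+1) * ((k:ℝ)+C)) = |cc k| * (((k:ℝ)+A) * ((k:ℝ)+B)) := by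
      calc |cc (k+1)| * (((k:ℝ)+1) * ((k:ℝ)+C))
          = |cc (k+1) * (((k:ℝ)+1) * ((k:ℝ)+C))| := by rw [abs_mul, abs_of_nonneg h1]
        _ = |cc k * (((k:ℝ)+A) * ((k:ℝ)+B))| := by rw [hrec]
        _ = |cc k| * (((k:ℝ)+A) * ((k:ℝ)+B)) := by rw [abs_mul, abs_of_nonneg h2]
    have hpos : (0:ℝ) < ((k:ℝ)+1) * ((k:ℝ)+C) := by positivity
    rw [← mul_le_mul_iff_of_pos_right hpos]
    calc |cc (k+1)| * ((k:ℝ)+2)^2 * (((k:ℝ)+1) * ((k:ℝ)+C))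
        = |cc (k+1)| * (((k:ℝ)+1) * ((k:ℝ)+C)) * ((k:ℝ)+2)^2 := by ring
      _ = |cc k| * (((k:ℝ)+A) * ((k:ℝ)+B)) * ((k:ℝ)+2)^2 := by rw [habs]
      _ = |cc k| * (((k:ℝ)+A) * ((k:ℝ)+B) * ((k:ℝ)+2)^2) := by ring
      _ ≤ |cc k| * (((k:ℝ)+1)^3 * ((k:ℝ)+C)) :=
          mul_le_mul_of_nonneg_left (key k hk) (abs_nonneg _)
      _ = |cc k| * ((k:ℝ)+1)^2 * (((k:ℝ)+1) * ((k:ℝ)+C)) := by ring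
  set M := (range (K+1)).sup' Finset.nonempty_range_add_one (fun k => |cc k| * ((k:ℝ)+1)^2)
    with hM
  have bound : ∀ k : ℕ, |cc k| * ((k:ℝ)+1)^2 ≤ M := by
    intro k
    induction k with
    | zero =>
      exact Finset.le_sup' (fun k : ℕ => |cc k| * ((k:ℝ)+1)^2) (Finset.mem_range.mpr (Nat.succ_pos K))
    | succ m ih =>
      by_cases h : m + 1 < K + 1
      · exact Finset.le_sup' (fun k : ℕ => |cc k| * ((k:ℝ)+1)^2) (Finset.mem_range.mpr h)
      · have hKm : (K:ℝ) ≤ (m:ℝ) := by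
          have : K ≤ m := by omega
          exact_mod_cast this
        have hstep := step m hKm
        have h' := hstep.trans ih
        push_cast
        ring_nf at h' ⊢
        linarith [h']
  have hM1 : (1:ℝ) ≤ M := by
    have := bound 0
    rw [hcc, co_zero] at this
    norm_num at this
    exact this
  have hM0 : (0:ℝ) ≤ M := le_trans zero_le_one hM1
  have ccM : ∀ k, |cc k| ≤ M := by
    intro k
    have h := bound k
    have h2 : (1:ℝ) ≤ ((k:ℝ)+1)^2 := one_le_pow₀ (by linarith [Nat.cast_nonneg (α := ℝ) k])
    nlinarith [abs_nonneg (cc k)]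
  have ccbound3 : ∀ k, |cc k| ≤ M * ((k:ℝ)+1)^3 := by
    intro k
    have h2 : (1:ℝ) ≤ ((k:ℝ)+1)^3 := one_le_pow₀ (by linarith [Nat.cast_nonneg (α := ℝ) k])
    nlinarith [ccM k]
  have ccsq : ∀ k, |cc k| ≤ M / ((k:ℝ)+1)^2 := fun k =>
    (le_div_iff₀ (by positivity)).mpr (bound k)
  -- coefficient sequences for the first and second derivative series
  set ee : ℕ → ℝ := fun k => ((k:ℝ)+1) * cc (k+1) with hee
  set ff : ℕ → ℝ := fun k => ((k:ℝ)+1) * ee (k+1) with hff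
  have eebound : ∀ k, |ee k| ≤ M * ((k:ℝ)+1)^3 := by
    intro k
    rw [hee]
    simp only []
    rw [abs_mul, abs_of_nonneg (by positivity : (0:ℝ) ≤ (k:ℝ)+1)]
    have h1 := ccM (k+1)
    have h2 : (1:ℝ) ≤ ((k:ℝ)+1)^2 := one_le_pow₀ (by linarith [Nat.cast_nonneg (α := ℝ) k])
    have h3 : (0:ℝ) ≤ (k:ℝ)+1 := by positivity
    calc ((k:ℝ)+1) * |cc (k+1)| ≤ ((k:ℝ)+1) * M := mul_le_mul_of_nonneg_left h1 h3
      _ ≤ M * ((k:ℝ)+1)^3 := by nlinarith [mul_nonneg (mul_nonneg hM0 h3) (by linarith : (0:ℝ) ≤ ((k:ℝ)+1)^2 - 1)]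
  have ffbound : ∀ k, |ff k| ≤ (8*M) * ((k:ℝ)+1)^4 := by
    intro k
    rw [hff]
    simp only []
    rw [abs_mul, abs_of_nonneg (by positivity : (0:ℝ) ≤ (k:ℝ)+1)]
    have h1 := eebound (k+1)
    push_cast at h1
    have h3 : (0:ℝ) ≤ (k:ℝ)+1 := by positivity
    have ht0 : (0:ℝ) ≤ (k:ℝ) := Nat.cast_nonneg k
    have hcube : ((k:ℝ)+1+1)^3 ≤ 8*((k:ℝ)+1)^3 := by
      nlinarith [ht0, mul_nonneg ht0 ht0, mul_nonneg (mul_nonneg ht0 ht0) ht0]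
    calc ((k:ℝ)+1) * |ee (k+1)| ≤ ((k:ℝ)+1) * (M * ((k:ℝ)+1+1)^3) :=
          mul_le_mul_of_nonneg_left h1 h3
      _ ≤ ((k:ℝ)+1) * (M * (8*((k:ℝ)+1)^3)) := by
          refine mul_le_mul_of_nonneg_left (mul_le_mul_of_nonneg_left hcube hM0) h3
      _ = (8*M) * ((k:ℝ)+1)^4 := by ring
  set F0 : ℝ → ℝ := fun y => ∑' k : ℕ, cc k * y^k with hF0
  set F1 : ℝ → ℝ := fun y => ∑' k : ℕ, ee k * y^k with hF1
  set F2 : ℝ → ℝ := fun y => ∑' k : ℕ, ff k * y^k with hF2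
  have S0 : ∀ {x:ℝ}, |x| < 1 → Summable (fun k => cc k * x^k) :=
    fun hx => summable_poly_bound cc M 3 ccbound3 hx
  have S1 : ∀ {x:ℝ}, |x| < 1 → Summable (fun k => ee k * x^k) :=
    fun hx => summable_poly_bound ee M 3 eebound hx
  have S2 : ∀ {x:ℝ}, |x| < 1 → Summable (fun k => ff k * x^k) :=
    fun hx => summable_poly_bound ff (8*M) 4 ffbound hx
  have D0 : ∀ {x:ℝ}, |x| < 1 → HasDerivAt F0 (F1 x) x :=
    fun hx => hasDerivAt_tsum_pow cc M ccbound3 hx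
  have D1 : ∀ {x:ℝ}, |x| < 1 → HasDerivAt F1 (F2 x) x :=
    fun hx => hasDerivAt_tsum_pow ee M eebound hx
  -- the hypergeometric ODE
  have cze : ∀ x : ℝ, |x| < 1 → ∀ k : ℕ,
      (sh ff k * x^k - sh (sh ff) k * x^k) + ((C * ee k) * x^k - ((A+B+1) * sh ee k) * x^k)
        - (A*B*cc k) * x^k = 0 := by
    intro x hx k
    have hco : sh ff k - sh (sh ff) k + C * ee k - (A+B+1) * sh ee k - A*B*cc k = 0 := by
      match k with
      | 0 =>
        have h := co_succ A B C hC0 0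
        push_cast at h
        simp only [sh, hee, hff]
        push_cast
        linear_combination h
      | 1 =>
        have h := co_succ A B C hC0 1
        push_cast at h
        simp only [sh, hee, hff]
        push_cast
        linear_combination h
      | (m+2) =>
        have h := co_succ A B C hC0 (m+2)
        push_cast at h
        simp only [sh, hee, hff]
        push_cast
        linear_combination h
    calc (sh ff k * x^k - sh (sh ff) k * x^k) + ((C * ee k) * x^k - ((A+B+1) * sh ee k) * x^k)
          - (A*B*cc k) * x^k
        = (sh ff k - sh (sh ff) k + C * ee k - (A+B+1) * sh ee k - A*B*cc k) * x^k := by ring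
      _ = 0 := by rw [hco, zero_mul]
  have ODE : ∀ x:ℝ, 0 < x → x < 1 →
      x*(1-x) * F2 x + (C - (A+B+1)*x) * F1 x - A*B * F0 x = 0 := by
    intro x hx0 hx1
    have hx : |x| < 1 := by rw [abs_of_pos hx0]; exact hx1
    have s0 := S0 hx
    have s1 := S1 hx
    have s2 := S2 hx
    have t1 : x * F2 x = ∑' k : ℕ, sh ff k * x^k := mul_tsum_sh s2
    have t1s : Summable (fun k => sh ff k * x^k) := summable_sh s2
    have t2 : x * (x * F2 x) = ∑' k : ℕ, sh (sh ff) k * x^k := by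
      rw [t1]; exact mul_tsum_sh t1s
    have t2s : Summable (fun k => sh (sh ff) k * x^k) := summable_sh t1s
    have t3 : x * F1 x = ∑' k : ℕ, sh ee k * x^k := mul_tsum_sh s1
    have t3s : Summable (fun k => sh ee k * x^k) := summable_sh s1
    have q1 : C * F1 x = ∑' k : ℕ, (C * ee k) * x^k := by
      rw [hF1]
      simp only []
      rw [← tsum_mul_left]
      exact tsum_congr fun k => by ring
    have q1s : Summable (fun k => (C * ee k) * x^k) :=
      (s1.mul_left C).congr (fun k => by ring)
    have q2 : (A+B+1) * (x * F1 x) = ∑' k : ℕ, ((A+B+1) * sh ee k) * x^k := by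
      rw [t3, ← tsum_mul_left]
      exact tsum_congr fun k => by ring
    have q2s : Summable (fun k => ((A+B+1) * sh ee k) * x^k) :=
      (t3s.mul_left (A+B+1)).congr (fun k => by ring)
    have q3 : A*B * F0 x = ∑' k : ℕ, (A*B*cc k) * x^k := by
      rw [hF0]
      simp only []
      rw [← tsum_mul_left]
      exact tsum_congr fun k => by ring
    have q3s : Summable (fun k => (A*B*cc k) * x^k) :=
      (s0.mul_left (A*B)).congr (fun k => by ring)
    have expand : x*(1-x) * F2 x + (C - (A+B+1)*x) * F1 x - A*B * F0 x
        = (x * F2 x - x*(x * F2 x)) + (C * F1 x - (A+B+1)*(x * F1 x)) - A*B * F0 x := by ring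
    rw [expand, t2, t1, q1, q2, q3, ← Summable.tsum_sub t1s t2s, ← Summable.tsum_sub q1s q2s,
      ← Summable.tsum_add (t1s.sub t2s) (q1s.sub q2s),
      ← Summable.tsum_sub ((t1s.sub t2s).add (q1s.sub q2s)) q3s]
    calc ∑' k : ℕ, ((sh ff k * x^k - sh (sh ff) k * x^k)
          + ((C * ee k) * x^k - ((A+B+1) * sh ee k) * x^k) - (A*B*cc k) * x^k)
        = ∑' _ : ℕ, (0:ℝ) := tsum_congr fun k => cze x hx k
      _ = 0 := tsum_zero
  -- values at 0
  have F00 : F0 0 = 1 := by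
    rw [hF0]
    simp only []
    rw [tsum_eq_single 0 (fun k hk => by simp [zero_pow hk])]
    simp [hcc, co_zero]
  have F10 : F1 0 = A*B/C := by
    rw [hF1]
    simp only []
    rw [tsum_eq_single 0 (fun k hk => by simp [zero_pow hk])]
    simp only [hee, pow_zero, mul_one, Nat.cast_zero, zero_add, one_mul]
    rw [hcc, co_one A B C hC0.ne']
  have hAB : 0 < A*B := mul_pos_of_neg_of_neg hA0 hB0
  have F10pos : 0 < F1 0 := by rw [F10]; exact div_pos hAB hC0
  -- monotonicity on segments where F1 ≥ 0
  have mono_seg : ∀ t:ℝ, 0 ≤ t → t < 1 → (∀ y, 0 < y → y < t → 0 ≤ F1 y) →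
      ∀ u v, 0 ≤ u → u ≤ v → v ≤ t → F0 u ≤ F0 v := by
    intro t ht0 ht1 hpos u v hu huv hvt
    have cont : ContinuousOn F0 (Set.Icc 0 t) := by
      intro y hy
      have hy1 : |y| < 1 := by
        rw [abs_of_nonneg hy.1]; exact lt_of_le_of_lt hy.2 ht1
      exact (D0 hy1).continuousAt.continuousWithinAt
    have hdiff : DifferentiableOn ℝ F0 (interior (Set.Icc 0 t)) := by
      intro y hy
      rw [interior_Icc] at hy
      have hy1 : |y| < 1 := by rw [abs_of_pos hy.1]; exact lt_trans hy.2 ht1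
      exact (D0 hy1).differentiableAt.differentiableWithinAt
    have hderiv : ∀ y ∈ interior (Set.Icc 0 t), 0 ≤ deriv F0 y := by
      intro y hy
      rw [interior_Icc] at hy
      have hy1 : |y| < 1 := by rw [abs_of_pos hy.1]; exact lt_trans hy.2 ht1
      rw [(D0 hy1).deriv]
      exact hpos y hy.1 hy.2
    exact monotoneOn_of_deriv_nonneg (convex_Icc 0 t) cont hdiff hderiv
      ⟨hu, le_trans huv hvt⟩ ⟨le_trans hu huv, hvt⟩ huv
  -- nonnegativity of the derivative on [0,1)
  have hF1nonneg : ∀ y:ℝ, 0 ≤ y → y < 1 → 0 ≤ F1 y := by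
    by_contra hcon
    push_neg at hcon
    obtain ⟨x₁, hx₁0, hx₁1, hneg⟩ := hcon
    have hx₁pos : 0 < x₁ := by
      rcases eq_or_lt_of_le hx₁0 with h|h
      · exfalso; rw [← h] at hneg; linarith [F10pos]
      · exact h
    have contF1 : ContinuousOn F1 (Set.Icc 0 x₁) := by
      intro y hy
      have hy1 : |y| < 1 := by
        rw [abs_of_nonneg hy.1]; exact lt_of_le_of_lt hy.2 hx₁1
      exact (D1 hy1).continuousAt.continuousWithinAt
    set Z : Set ℝ := Set.Icc 0 x₁ ∩ F1 ⁻¹' (Set.Iic 0) with hZ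
    have hZx₁ : x₁ ∈ Z := ⟨⟨hx₁0, le_rfl⟩, le_of_lt hneg⟩
    have hZbdd : BddBelow Z := ⟨0, fun z hz => hz.1.1⟩
    have hZclosed : IsClosed Z :=
      contF1.preimage_isClosed_of_isClosed isClosed_Icc isClosed_Iic
    set x₀ := sInf Z with hx₀def
    have hx₀Z : x₀ ∈ Z := hZclosed.csInf_mem ⟨x₁, hZx₁⟩ hZbdd
    obtain ⟨⟨hx₀0, hx₀x₁⟩, hx₀neg'⟩ := hx₀Z
    have hx₀neg : F1 x₀ ≤ 0 := hx₀neg'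
    have hbelow : ∀ y, 0 ≤ y → y < x₀ → 0 < F1 y := by
      intro y hy0 hyx₀
      by_contra hyn
      push_neg at hyn
      have hyZ : y ∈ Z := ⟨⟨hy0, le_trans (le_of_lt hyx₀) hx₀x₁⟩, hyn⟩
      have := csInf_le hZbdd hyZ
      rw [← hx₀def] at this
      linarith
    have hx₀pos : 0 < x₀ := by
      rcases eq_or_lt_of_le hx₀0 with h|h
      · exfalso; rw [← h] at hx₀neg; linarith [F10pos]
      · exact h
    have hx₀1 : x₀ < 1 := lt_of_le_of_lt hx₀x₁ hx₁1
    have hx₀abs : |x₀| < 1 := by rw [abs_of_pos hx₀pos]; exact hx₀1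
    have hF0x₀ : 1 ≤ F0 x₀ := by
      have := mono_seg x₀ hx₀0 hx₀1 (fun y hy0 hy1 => (hbelow y hy0.le hy1).le)
        0 x₀ le_rfl hx₀0 le_rfl
      rwa [F00] at this
    have hF0pos : 0 < F0 x₀ := lt_of_lt_of_le one_pos hF0x₀
    have hODE := ODE x₀ hx₀pos hx₀1
    have hx₀eq : F1 x₀ = 0 := by
      refine le_antisymm hx₀neg ?_
      have htend : Tendsto F1 (𝓝[<] x₀) (𝓝 (F1 x₀)) :=
        ((D1 hx₀abs).continuousAt.tendsto).mono_left nhdsWithin_le_nhds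
      refine ge_of_tendsto htend ?_
      filter_upwards [Ioo_mem_nhdsLT_of_mem
        (show x₀ ∈ Set.Ioc 0 x₀ from ⟨hx₀pos, le_rfl⟩)] with y hy
      exact (hbelow y hy.1.le hy.2).le
    rw [hx₀eq, mul_zero, add_zero] at hODE
    have h1 : 0 < x₀*(1-x₀) := by nlinarith
    have hF2pos : 0 < F2 x₀ := by
      by_contra hc
      push_neg at hc
      nlinarith [hODE, mul_nonneg h1.le (neg_nonneg.mpr hc), mul_pos hAB hF0pos]
    have hslope := hasDerivAt_iff_tendsto_slope.mp (D1 hx₀abs)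
    have hslope' : Tendsto (slope F1 x₀) (𝓝[<] x₀) (𝓝 (F2 x₀)) :=
      hslope.mono_left (nhdsWithin_mono _ (fun y hy => ne_of_lt hy))
    have hle : F2 x₀ ≤ 0 := by
      refine le_of_tendsto hslope' ?_
      filter_upwards [Ioo_mem_nhdsLT_of_mem
        (show x₀ ∈ Set.Ioc 0 x₀ from ⟨hx₀pos, le_rfl⟩)] with y hy
      rw [slope_def_field, hx₀eq, sub_zero]
      exact div_nonpos_of_nonneg_of_nonpos (hbelow y hy.1.le hy.2).le (by linarith [hy.2])
    linarith
  -- continuity on [0,1]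
  have contF0 : ContinuousOn F0 (Set.Icc (0:ℝ) 1) := by
    have hu : Summable (fun k:ℕ => M / ((k:ℝ)+1)^2) := by
      have h1 : Summable (fun k:ℕ => 1/((k:ℝ))^2) :=
        Real.summable_one_div_nat_pow.mpr one_lt_two
      have h2 : Summable (fun k:ℕ => 1/(((k+1:ℕ)):ℝ)^2) := (summable_nat_add_iff 1).mpr h1
      refine (h2.mul_left M).congr fun k => ?_
      push_cast
      ring
    have huni : TendstoUniformlyOn (fun n x => ∑ k ∈ range n, cc k * x^k) F0 atTop
        (Set.Icc (0:ℝ) 1) := by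
      rw [hF0]
      refine tendstoUniformlyOn_tsum_nat hu ?_
      intro k x hx
      rw [Real.norm_eq_abs, abs_mul, abs_pow]
      have hx1 : |x| ≤ 1 := abs_le.mpr ⟨by linarith [hx.1], hx.2⟩
      calc |cc k| * |x|^k ≤ |cc k| * 1 :=
            mul_le_mul_of_nonneg_left (pow_le_one₀ (abs_nonneg x) hx1) (abs_nonneg _)
        _ = |cc k| := mul_one _
        _ ≤ M / ((k:ℝ)+1)^2 := ccsq k
    exact huni.continuousOn (Frequently.of_forall fun n =>
      (continuous_finset_sum _ fun k _ => (continuous_const.mul (continuous_pow k))).continuousOn)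
  -- final assembly
  intro u hu v hv huv
  rcases lt_or_eq_of_le hv.2 with hv1 | hv1
  · exact mono_seg v hv.1 hv1 (fun y hy0 hy1 => hF1nonneg y hy0.le (lt_trans hy1 hv1))
      u v hu.1 huv le_rfl
  · rcases eq_or_lt_of_le huv with rfl | huv'
    · exact le_rfl
    · have hu1 : u < 1 := by rw [← hv1]; exact huv'
      have hcont1 : ContinuousWithinAt F0 (Set.Ico 0 1) 1 :=
        (contF0 1 (by norm_num)).mono Set.Ico_subset_Icc_self
      have hne : (𝓝[Set.Ico (0:ℝ) 1] 1).NeBot := by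
        rw [nhdsWithin_Ico_eq_nhdsLT one_pos]
        infer_instance
      rw [hv1]
      refine ge_of_tendsto hcont1 ?_
      filter_upwards [self_mem_nhdsWithin,
        mem_nhdsWithin_of_mem_nhds (isOpen_Ioi.mem_nhds hu1)] with y hy hyu
      exact mono_seg y hy.1 hy.2 (fun z hz0 hz1 => hF1nonneg z hz0.le (lt_trans hz1 hy.2))
        u y hu.1 (le_of_lt hyu) le_rfl



end HypAux

theorem hyp_monotone (n : ℕ) (hn : 2 ≤ n) (q : ℝ) (hq : 1 < q) (hq' : q < 1 + 1 / ((n : ℝ) - 1)) :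
    MonotoneOn (fun ρ : ℝ =>
        hyp (-(((n : ℝ) - 1) * (q - 1))) ((n : ℝ) / 2 + q - n * q) ((n : ℝ) / 2) ρ)
      (Set.Icc (0:ℝ) 1) ∧
    ∀ ρ ∈ Set.Icc (0:ℝ) 1,
      hyp (-(((n : ℝ) - 1) * (q - 1))) ((n : ℝ) / 2 + q - n * q) ((n : ℝ) / 2) ρ ≤
        hyp (-(((n : ℝ) - 1) * (q - 1))) ((n : ℝ) / 2 + q - n * q) ((n : ℝ) / 2) 1 := by
  have h2 : (2:ℝ) ≤ (n:ℝ) := by exact_mod_cast hn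
  have hx : 0 < (n:ℝ) - 1 := by linarith
  have hq1 : 0 < q - 1 := by linarith
  have hkey : ((n:ℝ)-1)*(q-1) < 1 := by
    have h := (lt_div_iff₀ hx).mp (by linarith : q - 1 < 1/((n:ℝ)-1))
    nlinarith [h]
  have hprod : 0 < ((n:ℝ)-1)*(q-1) := mul_pos hx hq1
  have hmono := HypAux.mono_general (-(((n : ℝ) - 1) * (q - 1))) ((n : ℝ) / 2 + q - n * q)
    ((n : ℝ) / 2)
    (by linarith) (by linarith) (by nlinarith [hprod, h2]) (by nlinarith [hkey])
    (by linarith) (by nlinarith [hprod, h2])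
  constructor
  · exact hmono
  · intro ρ hρ
    exact hmono hρ ⟨zero_le_one, le_rfl⟩ hρ.2
end

section
/- Let n ≥ 2, β ≥ 0, and define g(ρ) = ∫₀^π (1 + ρ² − 2ρ cos θ)^{β} sin^{n−2}θ dθ for ρ ∈ [0,1]. Then g is nondecreasing on [0,1]. -/
open Real MeasureTheory intervalIntegral Set Metric

namespace CosIntMono

noncomputable def u (ρ θ : ℝ) : ℝ := 1 + ρ ^ 2 - 2 * ρ * Real.cos θ

lemma u_lower {ρ : ℝ} (h0 : 0 ≤ ρ) (θ : ℝ) : (1 - ρ) ^ 2 ≤ u ρ θ := by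
  have := Real.cos_le_one θ
  unfold u; nlinarith

lemma u_pos {ρ : ℝ} (h0 : 0 ≤ ρ) (h1 : ρ < 1) (θ : ℝ) : 0 < u ρ θ :=
  lt_of_lt_of_le (by nlinarith) (u_lower h0 θ)

lemma u_upper {ρ : ℝ} (h0 : 0 ≤ ρ) (h1 : ρ ≤ 1) (θ : ℝ) : u ρ θ ≤ 4 := by
  have := Real.neg_one_le_cos θ
  unfold u; nlinarith

lemma rpow_le_add {m x : ℝ} (hm : 0 < m) (hmx : m ≤ x) (hx4 : x ≤ 4) (γ : ℝ) :
    x ^ γ ≤ m ^ γ + 4 ^ γ := by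
  rcases le_or_gt 0 γ with hγ | hγ
  · have h1 : x ^ γ ≤ 4 ^ γ := Real.rpow_le_rpow (le_trans hm.le hmx) hx4 hγ
    have h2 : (0:ℝ) ≤ m ^ γ := Real.rpow_nonneg hm.le γ
    linarith
  · have h1 : x ^ γ ≤ m ^ γ := Real.rpow_le_rpow_of_nonpos hm hmx hγ.le
    have h2 : (0:ℝ) ≤ (4:ℝ) ^ γ := Real.rpow_nonneg (by norm_num) γ
    linarith

lemma u_cont (ρ : ℝ) : Continuous fun θ => u ρ θ := by
  unfold u; continuity

lemma contθ {ρ : ℝ} (h0 : 0 ≤ ρ) (h1 : ρ < 1) (γ : ℝ) (j k : ℕ) :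
    Continuous fun θ : ℝ => (ρ - Real.cos θ) ^ j * u ρ θ ^ γ * Real.sin θ ^ k := by
  refine Continuous.mul (Continuous.mul (by continuity) ?_) (by continuity)
  rw [continuous_iff_continuousAt]
  intro θ
  exact ((u_cont ρ).continuousAt).rpow_const (Or.inl (u_pos h0 h1 θ).ne')

lemma contθ' {ρ : ℝ} (h0 : 0 ≤ ρ) (h1 : ρ < 1) (γ : ℝ) (k : ℕ) :
    Continuous fun θ : ℝ => Real.cos θ * u ρ θ ^ γ * Real.sin θ ^ k := by
  refine Continuous.mul (Continuous.mul (by continuity) ?_) (by continuity)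
  rw [continuous_iff_continuousAt]
  intro θ
  exact ((u_cont ρ).continuousAt).rpow_const (Or.inl (u_pos h0 h1 θ).ne')


noncomputable section

def gfun (n : ℕ) (β : ℝ) (ρ : ℝ) : ℝ := ∫ θ in (0:ℝ)..π, u ρ θ ^ β * Real.sin θ ^ (n - 2)
def Afun (n : ℕ) (β : ℝ) (ρ : ℝ) : ℝ := ∫ θ in (0:ℝ)..π, u ρ θ ^ (β-1) * Real.sin θ ^ (n - 2)
def Bfun (n : ℕ) (β : ℝ) (ρ : ℝ) : ℝ :=
  ∫ θ in (0:ℝ)..π, Real.cos θ * u ρ θ ^ (β-1) * Real.sin θ ^ (n - 2)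
def Cfun (n : ℕ) (β : ℝ) (ρ : ℝ) : ℝ := ∫ θ in (0:ℝ)..π, Real.sin θ ^ n * u ρ θ ^ (β-2)
def Dfun (n : ℕ) (β : ℝ) (ρ : ℝ) : ℝ :=
  ∫ θ in (0:ℝ)..π, (ρ - Real.cos θ) * u ρ θ ^ (β-1) * Real.sin θ ^ (n - 2)
def Efun (n : ℕ) (β : ℝ) (ρ : ℝ) : ℝ :=
  ∫ θ in (0:ℝ)..π, (ρ - Real.cos θ) ^ 2 * u ρ θ ^ (β-2) * Real.sin θ ^ (n - 2)

end

lemma cont_rpow {ρ : ℝ} (h0 : 0 ≤ ρ) (h1 : ρ < 1) (γ : ℝ) :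
    Continuous fun θ : ℝ => u ρ θ ^ γ := by
  rw [continuous_iff_continuousAt]
  intro θ
  exact ((u_cont ρ).continuousAt).rpow_const (Or.inl (u_pos h0 h1 θ).ne')

lemma hasDerivAt_u (ρ θ : ℝ) : HasDerivAt (fun θ => u ρ θ) (2 * ρ * Real.sin θ) θ := by
  have h2 : HasDerivAt (fun θ => 2 * ρ * Real.cos θ) (2 * ρ * -Real.sin θ) θ :=
    (Real.hasDerivAt_cos θ).const_mul (2 * ρ)
  have h3 := h2.const_sub (1 + ρ ^ 2)
  have : -(2 * ρ * -Real.sin θ) = 2 * ρ * Real.sin θ := by ring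
  rw [this] at h3
  exact h3

lemma ibp (n : ℕ) (hn : 2 ≤ n) (β : ℝ) {ρ : ℝ} (h0 : 0 < ρ) (h1 : ρ < 1) :
    (n - 1 : ℝ) * Bfun n β ρ + 2 * ρ * (β - 1) * Cfun n β ρ = 0 := by
  set φ : ℝ → ℝ := fun θ => Real.sin θ ^ (n - 1) * u ρ θ ^ (β - 1) with hφ
  set ψ : ℝ → ℝ := fun θ =>
    (n - 1 : ℝ) * (Real.cos θ * u ρ θ ^ (β-1) * Real.sin θ ^ (n - 2)) +
      (2 * ρ * (β - 1)) * (Real.sin θ ^ n * u ρ θ ^ (β-2)) with hψ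
  have hd : ∀ θ ∈ uIcc (0:ℝ) π, HasDerivAt φ (ψ θ) θ := by
    intro θ _
    have hs : HasDerivAt (fun θ => Real.sin θ ^ (n - 1))
        (((n-1 : ℕ) : ℝ) * Real.sin θ ^ (n - 1 - 1) * Real.cos θ) θ :=
      (Real.hasDerivAt_sin θ).pow (n - 1)
    have hup : HasDerivAt (fun θ => u ρ θ ^ (β - 1))
        ((2 * ρ * Real.sin θ) * (β - 1) * u ρ θ ^ (β - 1 - 1)) θ :=
      (hasDerivAt_u ρ θ).rpow_const (Or.inl (u_pos h0.le h1 θ).ne')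
    have h := hs.mul hup
    refine h.congr_deriv (Eq.symm ?_)
    have e1 : n - 1 - 1 = n - 2 := by omega
    have e2 : β - 1 - 1 = β - 2 := by ring
    have e3 : Real.sin θ ^ n = Real.sin θ ^ (n - 1) * Real.sin θ := by
      rw [← pow_succ]; congr 1; omega
    have e4 : ((n - 1 : ℕ) : ℝ) = (n : ℝ) - 1 := by
      have : (1:ℕ) ≤ n := by omega
      push_cast [Nat.cast_sub this]; ring
    simp only [hψ, e1, e2, e3, e4]
    ring
  have hcψ : Continuous ψ := by
    refine Continuous.add (continuous_const.mul ?_) (continuous_const.mul ?_)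
    · exact contθ' h0.le h1 (β-1) (n-2)
    · exact (by continuity : Continuous fun θ : ℝ => Real.sin θ ^ n).mul (cont_rpow h0.le h1 (β-2))
  have key := integral_eq_sub_of_hasDerivAt hd (hcψ.intervalIntegrable 0 π)
  have hφπ : φ π = 0 := by
    simp [hφ, Real.sin_pi, zero_pow (show n - 1 ≠ 0 by omega)]
  have hφ0 : φ 0 = 0 := by
    simp [hφ, Real.sin_zero, zero_pow (show n - 1 ≠ 0 by omega)]
  rw [hφπ, hφ0, sub_zero] at key
  have hsplit : (∫ θ in (0:ℝ)..π, ψ θ) =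
      (n - 1 : ℝ) * Bfun n β ρ + (2 * ρ * (β - 1)) * Cfun n β ρ := by
    rw [hψ]
    rw [intervalIntegral.integral_add
      (f := fun θ => (n - 1 : ℝ) * (Real.cos θ * u ρ θ ^ (β-1) * Real.sin θ ^ (n - 2)))
      (g := fun θ => (2 * ρ * (β - 1)) * (Real.sin θ ^ n * u ρ θ ^ (β-2))) ((continuous_const.mul (contθ' h0.le h1 (β-1) (n-2))).intervalIntegrable 0 π)
      ((continuous_const.mul ((by continuity : Continuous fun θ : ℝ => Real.sin θ ^ n).mul
          (cont_rpow h0.le h1 (β-2)))).intervalIntegrable 0 π)]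
    rw [intervalIntegral.integral_const_mul, intervalIntegral.integral_const_mul]
    rfl
  rw [hsplit] at key
  linarith [key]

lemma contA {ρ : ℝ} (h0 : 0 ≤ ρ) (h1 : ρ < 1) (γ : ℝ) (k : ℕ) :
    Continuous fun θ : ℝ => u ρ θ ^ γ * Real.sin θ ^ k :=
  (cont_rpow h0 h1 γ).mul (by continuity)

lemma contD {ρ : ℝ} (h0 : 0 ≤ ρ) (h1 : ρ < 1) (γ : ℝ) (k : ℕ) :
    Continuous fun θ : ℝ => (ρ - Real.cos θ) * u ρ θ ^ γ * Real.sin θ ^ k := by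
  exact ((by continuity : Continuous fun θ : ℝ => ρ - Real.cos θ).mul
    (cont_rpow h0 h1 γ)).mul (by continuity)

lemma contE {ρ : ℝ} (h0 : 0 ≤ ρ) (h1 : ρ < 1) (γ : ℝ) (k : ℕ) :
    Continuous fun θ : ℝ => (ρ - Real.cos θ) ^ 2 * u ρ θ ^ γ * Real.sin θ ^ k := by
  exact ((by continuity : Continuous fun θ : ℝ => (ρ - Real.cos θ) ^ 2).mul
    (cont_rpow h0 h1 γ)).mul (by continuity)

lemma contC {ρ : ℝ} (h0 : 0 ≤ ρ) (h1 : ρ < 1) (γ : ℝ) (k : ℕ) :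
    Continuous fun θ : ℝ => Real.sin θ ^ k * u ρ θ ^ γ :=
  (by continuity : Continuous fun θ : ℝ => Real.sin θ ^ k).mul (cont_rpow h0 h1 γ)

lemma EAC (n : ℕ) (hn : 2 ≤ n) (β : ℝ) {ρ : ℝ} (h0 : 0 ≤ ρ) (h1 : ρ < 1) :
    Efun n β ρ = Afun n β ρ - Cfun n β ρ := by
  unfold Efun Afun Cfun
  rw [← intervalIntegral.integral_sub ((contA h0 h1 (β-1) (n-2)).intervalIntegrable 0 π)
    ((contC h0 h1 (β-2) n).intervalIntegrable 0 π)]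
  refine intervalIntegral.integral_congr fun θ _ => ?_
  have hne := (u_pos h0 h1 θ).ne'
  have h1' : u ρ θ ^ (β-1) = u ρ θ ^ (β-2) * u ρ θ := by
    rw [show β-1 = (β-2)+1 by ring, Real.rpow_add_one hne]
  have h3 : Real.sin θ ^ n = Real.sin θ ^ 2 * Real.sin θ ^ (n-2) := by
    rw [← pow_add]; congr 1; omega
  have h2 : u ρ θ = (ρ - Real.cos θ) ^ 2 + Real.sin θ ^ 2 := by
    have := Real.sin_sq_add_cos_sq θ
    unfold u; nlinarith
  rw [h1', h3, h2]; ring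

lemma DAB (n : ℕ) (β : ℝ) {ρ : ℝ} (h0 : 0 ≤ ρ) (h1 : ρ < 1) :
    Dfun n β ρ = ρ * Afun n β ρ - Bfun n β ρ := by
  unfold Dfun Afun Bfun
  rw [← intervalIntegral.integral_const_mul,
    ← intervalIntegral.integral_sub
      (f := fun θ => ρ * (u ρ θ ^ (β-1) * Real.sin θ ^ (n - 2)))
      (g := fun θ => Real.cos θ * u ρ θ ^ (β-1) * Real.sin θ ^ (n - 2))
      ((continuous_const.mul (contA h0 h1 (β-1) (n-2))).intervalIntegrable 0 π)
      ((contθ' h0 h1 (β-1) (n-2)).intervalIntegrable 0 π)]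
  refine intervalIntegral.integral_congr fun θ _ => ?_
  ring

lemma A_nonneg (n : ℕ) (β : ℝ) {ρ : ℝ} (h0 : 0 ≤ ρ) (h1 : ρ < 1) :
    0 ≤ Afun n β ρ := by
  unfold Afun
  refine intervalIntegral.integral_nonneg Real.pi_pos.le fun θ hθ => ?_
  have hs := Real.sin_nonneg_of_nonneg_of_le_pi hθ.1 hθ.2
  have hu := (u_pos h0 h1 θ).le
  positivity

lemma ball_bounds {ρ : ℝ} (h0 : 0 < ρ) (h1 : ρ < 1) :
    ∃ ε > 0, ∀ x ∈ ball ρ ε,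
      (0 < x ∧ x < 1) ∧ ∀ θ, ((1 - ρ)/2) ^ 2 ≤ u x θ ∧ u x θ ≤ 4 := by
  refine ⟨min (ρ/2) ((1-ρ)/2), ?_, fun x hx => ?_⟩
  · apply lt_min <;> linarith
  rw [mem_ball, Real.dist_eq] at hx
  have h2 := abs_lt.1 (lt_of_lt_of_le hx (min_le_left _ _))
  have h3 := abs_lt.1 (lt_of_lt_of_le hx (min_le_right _ _))
  have hx0 : 0 < x := by linarith
  have hx1 : x < 1 := by linarith
  refine ⟨⟨hx0, hx1⟩, fun θ => ⟨?_, u_upper hx0.le hx1.le θ⟩⟩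
  have hlow := u_lower hx0.le θ
  nlinarith

lemma hasDerivAt_inner (t x : ℝ) :
    HasDerivAt (fun x => u x t) (2 * x - 2 * Real.cos t) x := by
  have h1 : HasDerivAt (fun x : ℝ => 1 + x ^ 2) (2 * x) x := by
    simpa using (hasDerivAt_pow 2 x).const_add 1
  have h2 : HasDerivAt (fun x : ℝ => 2 * x * Real.cos t) (2 * Real.cos t) x := by
    simpa [mul_assoc] using ((hasDerivAt_id x).const_mul 2).mul_const (Real.cos t)
  have h3 := h1.sub h2
  unfold u
  exact h3

lemma abs_sin_pow_le_one (t : ℝ) (k : ℕ) : |Real.sin t ^ k| ≤ 1 := by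
  rw [abs_pow]
  exact pow_le_one₀ (abs_nonneg _) (abs_le.2 ⟨Real.neg_one_le_sin t, Real.sin_le_one t⟩)

lemma hasDerivAt_gfun (n : ℕ) (β : ℝ) {ρ : ℝ} (h0 : 0 < ρ) (h1 : ρ < 1) :
    HasDerivAt (gfun n β) (2 * β * Dfun n β ρ) ρ := by
  obtain ⟨ε, hε, hball⟩ := ball_bounds h0 h1
  have h1ρ : 0 < (1 - ρ)/2 := by linarith
  have hmpos : 0 < ((1 - ρ)/2) ^ 2 := pow_pos h1ρ 2
  have hmain : HasDerivAt (fun x => ∫ θ in (0:ℝ)..π, u x θ ^ β * Real.sin θ ^ (n - 2))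
      (∫ θ in (0:ℝ)..π, ((2*ρ - 2*Real.cos θ) * β * u ρ θ ^ (β-1)) * Real.sin θ ^ (n - 2)) ρ := by
    refine (intervalIntegral.hasDerivAt_integral_of_dominated_loc_of_deriv_le
      (𝕜 := ℝ) (μ := MeasureTheory.volume) (a := (0:ℝ)) (b := π) (x₀ := ρ)
      (F := fun x θ => u x θ ^ β * Real.sin θ ^ (n - 2))
      (F' := fun x θ => ((2*x - 2*Real.cos θ) * β * u x θ ^ (β-1)) * Real.sin θ ^ (n - 2))
      (bound := fun _ => 4 * |β| * ((((1 - ρ)/2) ^ 2) ^ (β-1) + 4 ^ (β-1)))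
      (Metric.ball_mem_nhds ρ hε) ?_ ?_ ?_ ?_ ?_ ?_).2
    · filter_upwards [Metric.ball_mem_nhds ρ hε] with x hx
      exact (contA (hball x hx).1.1.le (hball x hx).1.2 β (n-2)).aestronglyMeasurable
    · exact (contA h0.le h1 β (n-2)).intervalIntegrable 0 π
    · exact ((((by continuity : Continuous fun θ : ℝ => 2*ρ - 2*Real.cos θ).mul
        continuous_const).mul (cont_rpow h0.le h1 (β-1))).mul
        (by continuity : Continuous fun θ : ℝ => Real.sin θ ^ (n-2))).aestronglyMeasurable
    · refine Filter.Eventually.of_forall fun t _ x hx => ?_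
      obtain ⟨⟨hx0, hx1⟩, hu⟩ := hball x hx
      have hb1 : |2*x - 2*Real.cos t| ≤ 4 := by
        have := Real.neg_one_le_cos t; have := Real.cos_le_one t
        rw [abs_le]; constructor <;> nlinarith
      have hb2 : |u x t ^ (β-1)| ≤ (((1 - ρ)/2) ^ 2) ^ (β-1) + 4 ^ (β-1) := by
        rw [abs_of_nonneg (Real.rpow_nonneg (le_trans hmpos.le (hu t).1) _)]
        exact rpow_le_add hmpos (hu t).1 (hu t).2 _
      have hb3 := abs_sin_pow_le_one t (n-2)
      rw [Real.norm_eq_abs, abs_mul, abs_mul, abs_mul]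
      calc |2*x - 2*Real.cos t| * |β| * |u x t ^ (β-1)| * |Real.sin t ^ (n-2)|
          ≤ 4 * |β| * ((((1 - ρ)/2) ^ 2) ^ (β-1) + 4 ^ (β-1)) * 1 := by
            gcongr <;> first
              | exact hb1
              | exact hb2
              | exact hb3
              | positivity
              | exact le_trans (abs_nonneg _) hb2
        _ = 4 * |β| * ((((1 - ρ)/2) ^ 2) ^ (β-1) + 4 ^ (β-1)) := mul_one _
    · exact intervalIntegrable_const
    · refine Filter.Eventually.of_forall fun t _ x hx => ?_
      obtain ⟨⟨hx0, hx1⟩, hu⟩ := hball x hx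
      exact ((hasDerivAt_inner t x).rpow_const (Or.inl (u_pos hx0.le hx1 t).ne')).mul_const _
  have hval : (∫ θ in (0:ℝ)..π, ((2*ρ - 2*Real.cos θ) * β * u ρ θ ^ (β-1)) * Real.sin θ ^ (n - 2))
      = 2 * β * Dfun n β ρ := by
    unfold Dfun
    rw [← intervalIntegral.integral_const_mul]
    exact intervalIntegral.integral_congr fun θ _ => by ring
  rw [hval] at hmain
  exact hmain

lemma hasDerivAt_Dfun (n : ℕ) (β : ℝ) {ρ : ℝ} (h0 : 0 < ρ) (h1 : ρ < 1) :
    HasDerivAt (Dfun n β) (Afun n β ρ + 2 * (β - 1) * Efun n β ρ) ρ := by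
  obtain ⟨ε, hε, hball⟩ := ball_bounds h0 h1
  have h1ρ : 0 < (1 - ρ)/2 := by linarith
  have hmpos : 0 < ((1 - ρ)/2) ^ 2 := pow_pos h1ρ 2
  have hmain : HasDerivAt (fun x => ∫ θ in (0:ℝ)..π, (x - Real.cos θ) * u x θ ^ (β-1) * Real.sin θ ^ (n - 2))
      (∫ θ in (0:ℝ)..π, (1 * u ρ θ ^ (β-1) +
        (ρ - Real.cos θ) * ((2*ρ - 2*Real.cos θ) * (β-1) * u ρ θ ^ (β-1-1))) * Real.sin θ ^ (n - 2)) ρ := by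
    refine (intervalIntegral.hasDerivAt_integral_of_dominated_loc_of_deriv_le
      (𝕜 := ℝ) (μ := MeasureTheory.volume) (a := (0:ℝ)) (b := π) (x₀ := ρ)
      (F := fun x θ => (x - Real.cos θ) * u x θ ^ (β-1) * Real.sin θ ^ (n - 2))
      (F' := fun x θ => (1 * u x θ ^ (β-1) +
        (x - Real.cos θ) * ((2*x - 2*Real.cos θ) * (β-1) * u x θ ^ (β-1-1))) * Real.sin θ ^ (n - 2))
      (bound := fun _ => ((((1 - ρ)/2) ^ 2) ^ (β-1) + 4 ^ (β-1)) +
        8 * |β-1| * ((((1 - ρ)/2) ^ 2) ^ (β-2) + 4 ^ (β-2)))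
      (Metric.ball_mem_nhds ρ hε) ?_ ?_ ?_ ?_ ?_ ?_).2
    · filter_upwards [Metric.ball_mem_nhds ρ hε] with x hx
      exact (contD (hball x hx).1.1.le (hball x hx).1.2 (β-1) (n-2)).aestronglyMeasurable
    · exact (contD h0.le h1 (β-1) (n-2)).intervalIntegrable 0 π
    · refine Continuous.aestronglyMeasurable ?_
      refine Continuous.mul (Continuous.add (continuous_const.mul (cont_rpow h0.le h1 (β-1))) ?_)
        (by continuity : Continuous fun θ : ℝ => Real.sin θ ^ (n-2))
      exact (by continuity : Continuous fun θ : ℝ => ρ - Real.cos θ).mul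
        (((by continuity : Continuous fun θ : ℝ => 2*ρ - 2*Real.cos θ).mul
          continuous_const).mul (cont_rpow h0.le h1 (β-1-1)))
    · refine Filter.Eventually.of_forall fun t _ x hx => ?_
      obtain ⟨⟨hx0, hx1⟩, hu⟩ := hball x hx
      have hc1 : |x - Real.cos t| ≤ 2 := by
        have := Real.neg_one_le_cos t; have := Real.cos_le_one t
        rw [abs_le]; constructor <;> nlinarith
      have hc2 : |2*x - 2*Real.cos t| ≤ 4 := by
        have := Real.neg_one_le_cos t; have := Real.cos_le_one t
        rw [abs_le]; constructor <;> nlinarith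
      have hb1 : |u x t ^ (β-1)| ≤ (((1 - ρ)/2) ^ 2) ^ (β-1) + 4 ^ (β-1) := by
        rw [abs_of_nonneg (Real.rpow_nonneg (le_trans hmpos.le (hu t).1) _)]
        exact rpow_le_add hmpos (hu t).1 (hu t).2 _
      have hb2 : |u x t ^ (β-1-1)| ≤ (((1 - ρ)/2) ^ 2) ^ (β-2) + 4 ^ (β-2) := by
        rw [show β-1-1 = β-2 by ring,
          abs_of_nonneg (Real.rpow_nonneg (le_trans hmpos.le (hu t).1) _)]
        exact rpow_le_add hmpos (hu t).1 (hu t).2 _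
      have hb3 := abs_sin_pow_le_one t (n-2)
      rw [Real.norm_eq_abs, abs_mul]
      have habs : |1 * u x t ^ (β-1) +
          (x - Real.cos t) * ((2*x - 2*Real.cos t) * (β-1) * u x t ^ (β-1-1))|
          ≤ ((((1 - ρ)/2) ^ 2) ^ (β-1) + 4 ^ (β-1)) +
            8 * |β-1| * ((((1 - ρ)/2) ^ 2) ^ (β-2) + 4 ^ (β-2)) := by
        refine le_trans (abs_add_le _ _) ?_
        have t2 : |(x - Real.cos t) * ((2*x - 2*Real.cos t) * (β-1) * u x t ^ (β-1-1))|
            ≤ 8 * |β-1| * ((((1 - ρ)/2) ^ 2) ^ (β-2) + 4 ^ (β-2)) := by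
          rw [abs_mul, abs_mul, abs_mul]
          calc |x - Real.cos t| * (|2*x - 2*Real.cos t| * |β-1| * |u x t ^ (β-1-1)|)
              ≤ 2 * (4 * |β-1| * ((((1 - ρ)/2) ^ 2) ^ (β-2) + 4 ^ (β-2))) := by
                gcongr <;> first
                  | exact hc1
                  | exact hc2
                  | exact hb2
                  | skip
            _ = 8 * |β-1| * ((((1 - ρ)/2) ^ 2) ^ (β-2) + 4 ^ (β-2)) := by ring
        simp only [one_mul]
        linarith [hb1, t2]
      have hKnn : (0:ℝ) ≤ ((((1 - ρ)/2) ^ 2) ^ (β-1) + 4 ^ (β-1)) +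
          8 * |β-1| * ((((1 - ρ)/2) ^ 2) ^ (β-2) + 4 ^ (β-2)) :=
        le_trans (abs_nonneg _) habs
      calc |1 * u x t ^ (β-1) +
            (x - Real.cos t) * ((2*x - 2*Real.cos t) * (β-1) * u x t ^ (β-1-1))| *
            |Real.sin t ^ (n-2)|
          ≤ (((((1 - ρ)/2) ^ 2) ^ (β-1) + 4 ^ (β-1)) +
            8 * |β-1| * ((((1 - ρ)/2) ^ 2) ^ (β-2) + 4 ^ (β-2))) * 1 :=
            mul_le_mul habs hb3 (abs_nonneg _) hKnn
        _ = _ := mul_one _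
    · exact intervalIntegrable_const
    · refine Filter.Eventually.of_forall fun t _ x hx => ?_
      obtain ⟨⟨hx0, hx1⟩, hu⟩ := hball x hx
      exact (((hasDerivAt_id x).sub_const (Real.cos t)).mul
        ((hasDerivAt_inner t x).rpow_const (Or.inl (u_pos hx0.le hx1 t).ne'))).mul_const _
  have hval : (∫ θ in (0:ℝ)..π, (1 * u ρ θ ^ (β-1) +
        (ρ - Real.cos θ) * ((2*ρ - 2*Real.cos θ) * (β-1) * u ρ θ ^ (β-1-1))) * Real.sin θ ^ (n - 2))
      = Afun n β ρ + 2 * (β - 1) * Efun n β ρ := by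
    unfold Afun Efun
    rw [← intervalIntegral.integral_const_mul,
      ← intervalIntegral.integral_add
        (f := fun θ => u ρ θ ^ (β-1) * Real.sin θ ^ (n - 2))
        (g := fun θ => 2 * (β - 1) * ((ρ - Real.cos θ) ^ 2 * u ρ θ ^ (β - 2) * Real.sin θ ^ (n - 2)))
        ((contA h0.le h1 (β-1) (n-2)).intervalIntegrable 0 π)
        ((continuous_const.mul (contE h0.le h1 (β-2) (n-2))).intervalIntegrable 0 π)]
    refine intervalIntegral.integral_congr fun θ _ => ?_
    rw [show β-1-1 = β-2 by ring]
    ring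
  rw [hval] at hmain
  exact hmain

lemma hasDerivAt_hfun (n : ℕ) (hn : 2 ≤ n) (β : ℝ) {ρ : ℝ} (h0 : 0 < ρ) (h1 : ρ < 1) :
    HasDerivAt (fun x => x ^ (n-1) * Dfun n β x)
      ((2*β + n - 2) * (ρ ^ (n-1) * Afun n β ρ)) ρ := by
  have hD := hasDerivAt_Dfun n β h0 h1
  have hp : HasDerivAt (fun x : ℝ => x ^ (n-1)) (((n-1:ℕ):ℝ) * ρ ^ (n-1-1)) ρ :=
    hasDerivAt_pow (n-1) ρ
  have h := hp.mul hD
  refine h.congr_deriv (Eq.symm ?_)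
  have e1 : n - 1 - 1 = n - 2 := by omega
  have e4 : ((n-1:ℕ):ℝ) = (n:ℝ) - 1 := by
    have h1n : (1:ℕ) ≤ n := by omega
    push_cast [Nat.cast_sub h1n]; ring
  have e5 : ρ ^ (n-1) = ρ * ρ ^ (n-2) := by
    rw [← pow_succ']
    congr 1; omega
  have hE := EAC n hn β h0.le h1
  have hDe := DAB n β h0.le h1
  have hB := ibp n hn β h0 h1
  rw [e1, e4, e5, hE, hDe]
  linear_combination (ρ ^ (n-2)) * hB

lemma D_bound (n : ℕ) (β : ℝ) {ρ x : ℝ} (h1 : ρ < 1) (hx0 : 0 < x) (hxρ : x ≤ ρ) :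
    |Dfun n β x| ≤ 2 * ((((1-ρ)/2) ^ 2) ^ (β-1) + 4 ^ (β-1)) * π := by
  have hx1 : x < 1 := lt_of_le_of_lt hxρ h1
  have h1ρ : 0 < (1 - ρ)/2 := by linarith
  have hmpos : 0 < ((1 - ρ)/2) ^ 2 := pow_pos h1ρ 2
  have hb : ∀ θ ∈ Set.uIoc (0:ℝ) π,
      ‖(x - Real.cos θ) * u x θ ^ (β-1) * Real.sin θ ^ (n-2)‖
        ≤ 2 * ((((1-ρ)/2) ^ 2) ^ (β-1) + 4 ^ (β-1)) := by
    intro θ _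
    have hum : ((1-ρ)/2) ^ 2 ≤ u x θ := by
      have := u_lower hx0.le θ
      nlinarith
    have hu4 := u_upper hx0.le hx1.le θ
    have hc1 : |x - Real.cos θ| ≤ 2 := by
      have := Real.neg_one_le_cos θ; have := Real.cos_le_one θ
      rw [abs_le]; constructor <;> nlinarith
    have hb2 : |u x θ ^ (β-1)| ≤ (((1-ρ)/2) ^ 2) ^ (β-1) + 4 ^ (β-1) := by
      rw [abs_of_nonneg (Real.rpow_nonneg (le_trans hmpos.le hum) _)]
      exact rpow_le_add hmpos hum hu4 _
    have hb3 := abs_sin_pow_le_one θ (n-2)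
    rw [Real.norm_eq_abs, abs_mul, abs_mul]
    calc |x - Real.cos θ| * |u x θ ^ (β-1)| * |Real.sin θ ^ (n-2)|
        ≤ 2 * ((((1-ρ)/2) ^ 2) ^ (β-1) + 4 ^ (β-1)) * 1 := by gcongr
      _ = _ := mul_one _
  have := intervalIntegral.norm_integral_le_of_norm_le_const hb
  rw [sub_zero, abs_of_nonneg Real.pi_pos.le] at this
  exact this

lemma D_nonneg (n : ℕ) (hn : 2 ≤ n) (β : ℝ) (hβ : 0 ≤ β) {ρ : ℝ}
    (h0 : 0 < ρ) (h1 : ρ < 1) : 0 ≤ Dfun n β ρ := by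
  set K : ℝ := 2 * ((((1-ρ)/2) ^ 2) ^ (β-1) + 4 ^ (β-1)) * π with hKdef
  have h1ρ : 0 < (1 - ρ)/2 := by linarith
  have hKnn : 0 ≤ K := by
    rw [hKdef]
    have := Real.rpow_nonneg (le_of_lt (pow_pos h1ρ 2)) (β-1)
    have := Real.rpow_nonneg (show (0:ℝ) ≤ 4 by norm_num) (β-1)
    have := Real.pi_pos
    positivity
  have hmono : MonotoneOn (fun x => x ^ (n-1) * Dfun n β x) (Set.Ioo 0 1) := by
    apply monotoneOn_of_deriv_nonneg (convex_Ioo 0 1)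
    · intro x hx
      exact ((hasDerivAt_hfun n hn β hx.1 hx.2).continuousAt).continuousWithinAt
    · intro x hx
      rw [interior_Ioo] at hx
      exact ((hasDerivAt_hfun n hn β hx.1 hx.2).differentiableAt).differentiableWithinAt
    · intro x hx
      rw [interior_Ioo] at hx
      rw [(hasDerivAt_hfun n hn β hx.1 hx.2).deriv]
      have hA := A_nonneg n β hx.1.le hx.2
      have hcast : (2:ℝ) ≤ n := by exact_mod_cast hn
      exact mul_nonneg (by linarith) (mul_nonneg (pow_nonneg hx.1.le _) hA)
  by_contra hD
  push_neg at hD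
  have hρpow : 0 < ρ ^ (n-1) := pow_pos h0 _
  set δ : ℝ := -(ρ ^ (n-1) * Dfun n β ρ) with hδdef
  have hδpos : 0 < δ := by
    rw [hδdef]
    nlinarith
  set x : ℝ := min (ρ/2) (δ/(K+1)) with hxdef
  have hx0 : 0 < x := lt_min (by linarith) (by positivity)
  have hxρ : x ≤ ρ := le_trans (min_le_left _ _) (by linarith)
  have hx1 : x < 1 := lt_of_le_of_lt hxρ h1
  have hxIoo : x ∈ Set.Ioo (0:ℝ) 1 := ⟨hx0, hx1⟩
  have hρIoo : ρ ∈ Set.Ioo (0:ℝ) 1 := ⟨h0, h1⟩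
  have hmle := hmono hxIoo hρIoo hxρ
  have hxpow : x ^ (n-1) ≤ x := pow_le_of_le_one hx0.le hx1.le (by omega)
  have hDb := D_bound n β h1 hx0 hxρ
  have hlow : -(x * K) ≤ x ^ (n-1) * Dfun n β x := by
    have h1' : -(K) ≤ Dfun n β x := by
      have := abs_le.1 hDb
      linarith [this.1]
    nlinarith [pow_nonneg hx0.le (n-1), pow_le_of_le_one hx0.le hx1.le (show n-1 ≠ 0 by omega),
      abs_le.1 hDb]
  have hxsmall : x * K < δ := by
    have hxle : x ≤ δ/(K+1) := min_le_right _ _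
    have : x * K ≤ (δ/(K+1)) * K := by nlinarith
    have hlt : (δ/(K+1)) * K < δ := by
      rw [div_mul_eq_mul_div, div_lt_iff₀ (by linarith)]
      nlinarith
    linarith
  have : -(δ) < x ^ (n-1) * Dfun n β x := by linarith
  have hfin : x ^ (n-1) * Dfun n β x ≤ ρ ^ (n-1) * Dfun n β ρ := hmle
  rw [hδdef] at this
  linarith

theorem main (n : ℕ) (hn : 2 ≤ n) (β : ℝ) (hβ : 0 ≤ β) :
    MonotoneOn (gfun n β) (Set.Icc (0:ℝ) 1) := by
  apply monotoneOn_of_deriv_nonneg (convex_Icc 0 1)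
  · apply Continuous.continuousOn
    have hcont : Continuous (Function.uncurry
        fun (ρ θ : ℝ) => u ρ θ ^ β * Real.sin θ ^ (n-2)) := by
      show Continuous fun p : ℝ × ℝ => u p.1 p.2 ^ β * Real.sin p.2 ^ (n-2)
      refine Continuous.mul ?_ ((Real.continuous_sin.comp continuous_snd).pow _)
      refine (Real.continuous_rpow_const hβ).comp ?_
      unfold u
      exact (continuous_const.add (continuous_fst.pow 2)).sub
        ((continuous_const.mul continuous_fst).mul (Real.continuous_cos.comp continuous_snd))
    exact intervalIntegral.continuous_parametric_intervalIntegral_of_continuous' hcont 0 π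
  · intro x hx
    rw [interior_Icc] at hx
    exact ((hasDerivAt_gfun n β hx.1 hx.2).differentiableAt).differentiableWithinAt
  · intro x hx
    rw [interior_Icc] at hx
    rw [(hasDerivAt_gfun n β hx.1 hx.2).deriv]
    exact mul_nonneg (by linarith) (D_nonneg n hn β hβ hx.1 hx.2)

end CosIntMono

theorem cos_integral_monotone (n : ℕ) (hn : 2 ≤ n) (β : ℝ) (hβ : 0 ≤ β) :
    MonotoneOn (fun ρ : ℝ =>
        ∫ θ in (0:ℝ)..π, (1 + ρ ^ 2 - 2 * ρ * Real.cos θ) ^ β * Real.sin θ ^ (n - 2))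
      (Set.Icc (0:ℝ) 1) :=
  CosIntMono.main n hn β hβ
end
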